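/- arXiv:1610.03820 — 4 statements merged into one kernel-verified Lean document; each statement's English description precedes it below -/
import Mathlib

section
/- Let X be a generic set of r = 2k points in P^1 x P^1 (k ≥ 1). Then: (i) (I_X)_{(i,1)} = 0 for all i < k; (ii) dim_k (I_X)_{(k,1)} = 2; (iii) for every a ≥ k, (I_X)_{(a+1,1)} = R_{(1,0)} · (I_X)_{(a,1)}, i.e. the k-span of s·f and t·f for f in (I_X)_{(a,1)}. Consequently the graded k[s,t]-module M = ⊕_{i≥0} (I_X)_{(i,1)} is minimally generated by exactly two elements, both of bidegree (k,1). -/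
open MvPolynomial

noncomputable section

variable (k : Type) [Field k] [IsAlgClosed k] [CharZero k]

/-- The bigrading weight on the variables `s, t, u, v` of the total coordinate ring
`R = k[s,t,u,v]` of `ℙ¹ × ℙ¹`: `deg s = deg t = (1,0)`, `deg u = deg v = (0,1)`. -/
def bw : Fin 4 → ℕ × ℕ := ![(1,0),(1,0),(0,1),(0,1)]

/-- The graded piece `R_{(i,j)}` of bihomogeneous forms of bidegree `(i,j)`. -/
def bideg (i j : ℕ) : Submodule k (MvPolynomial (Fin 4) k) :=
  weightedHomogeneousSubmodule k (bw) ((i, j) : ℕ × ℕ)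

/-- The subalgebra `k[s,t] ⊆ R`. -/
def Kst : Subalgebra k (MvPolynomial (Fin 4) k) := Algebra.adjoin k {X 0, X 1}

/-- A point of `ℙ¹ × ℙ¹`. -/
abbrev Pt := Projectivization k (Fin 2 → k) × Projectivization k (Fin 2 → k)

/-- A nonzero linear form in `s,t` vanishing at `A ∈ ℙ¹` (for the first factor). -/
def hForm (A : Projectivization k (Fin 2 → k)) : MvPolynomial (Fin 4) k :=
  C (A.rep 1) * X 0 - C (A.rep 0) * X 1

/-- A nonzero linear form in `u,v` vanishing at `B ∈ ℙ¹` (for the second factor). -/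
def lForm (B : Projectivization k (Fin 2 → k)) : MvPolynomial (Fin 4) k :=
  C (B.rep 1) * X 2 - C (B.rep 0) * X 3

/-- The bihomogeneous ideal `I_P = (h, l)` of a point `P = A × B` of `ℙ¹ × ℙ¹`. -/
def ptIdeal (P : Pt k) : Ideal (MvPolynomial (Fin 4) k) :=
  Ideal.span {hForm k P.1, lForm k P.2}

/-- The ideal `I_X = ⋂_{P ∈ X} I_P` of a finite set of points `X ⊆ ℙ¹ × ℙ¹`. -/
def idealX (Xpts : Finset (Pt k)) : Ideal (MvPolynomial (Fin 4) k) :=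
  ⨅ P ∈ Xpts, ptIdeal k P

/-- The graded piece `(I_X)_{(i,j)}` as a `k`-vector space. -/
def pieceI (Xpts : Finset (Pt k)) (i j : ℕ) : Submodule k (MvPolynomial (Fin 4) k) :=
  (Submodule.restrictScalars k (idealX k Xpts)) ⊓ bideg k i j

/-- `X` is a generic set of `r` points of `ℙ¹ × ℙ¹`: it consists of `r` distinct points and
its bigraded Hilbert function `H_X(i,j) = dim_k R_{(i,j)} - dim_k (I_X)_{(i,j)}`
(where `dim_k R_{(i,j)} = (i+1)(j+1)`) equals `min ((i+1)(j+1)) r` for all `(i,j)`. -/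
def GenericPts (Xpts : Finset (Pt k)) (r : ℕ) : Prop :=
  Xpts.card = r ∧ ∀ i j : ℕ,
    (i+1)*(j+1) - Module.finrank k ↥(pieceI k Xpts i j) = min ((i+1)*(j+1)) r

/-- `R_{(1,0)} · N`: the `k`-span of `s·f` and `t·f` for `f ∈ N`. -/
def bump (N : Submodule k (MvPolynomial (Fin 4) k)) : Submodule k (MvPolynomial (Fin 4) k) :=
  Submodule.span k ((fun p => X 0 * p) '' (N : Set (MvPolynomial (Fin 4) k)) ∪
    (fun p => X 1 * p) '' (N : Set (MvPolynomial (Fin 4) k)))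

set_option linter.unusedSectionVars false

lemma weight_bw_eq (d : Fin 4 →₀ ℕ) :
    (Finsupp.weight bw) d = (d 0 + d 1, d 2 + d 3) := by
  rw [Finsupp.weight_apply, Finsupp.sum_fintype _ _ (fun i => zero_smul ℕ (bw i)),
    Fin.sum_univ_four]
  simp [bw, Prod.ext_iff, Prod.smul_def]

lemma dsum_eq (d : Fin 4 →₀ ℕ) : (d.sum fun _ e => e) = d 0 + d 1 + d 2 + d 3 := by
  rw [Finsupp.sum_fintype _ _ (fun i => rfl), Fin.sum_univ_four]

lemma fd_bideg (i j : ℕ) : FiniteDimensional k (bideg k i j) := by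
  apply Submodule.finiteDimensional_of_le (S₂ := MvPolynomial.restrictTotalDegree (Fin 4) k (i+j))
  intro p hp
  rw [MvPolynomial.mem_restrictTotalDegree]
  apply Finset.sup_le
  intro d hd
  have h2 := hp (MvPolynomial.mem_support_iff.mp hd)
  rw [weight_bw_eq] at h2
  rw [dsum_eq]
  simp only [Prod.ext_iff] at h2
  omega

lemma fd_pieceI (Xpts : Finset (Pt k)) (i j : ℕ) : FiniteDimensional k (pieceI k Xpts i j) :=
  haveI := fd_bideg k i j
  Submodule.finiteDimensional_of_le inf_le_right

lemma homog_of_X_mul (x : Fin 4) (h : MvPolynomial (Fin 4) k) (m : ℕ × ℕ)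
    (H : MvPolynomial.IsWeightedHomogeneous bw (X x * h) (m + bw x)) :
    MvPolynomial.IsWeightedHomogeneous bw h m := by
  intro d hd
  have hc : MvPolynomial.coeff (Finsupp.single x 1 + d) (X x * h) = MvPolynomial.coeff d h :=
    MvPolynomial.coeff_X_mul d x h
  have h2 := H (by rw [hc]; exact hd)
  rw [map_add] at h2
  have hs : (Finsupp.weight bw) (Finsupp.single x 1) = bw x := by
    rw [Finsupp.weight_apply, Finsupp.sum_single_index (zero_smul ℕ (bw x))]
    exact one_smul _ _
  rw [hs] at h2
  have h3 : (Finsupp.weight bw) d + bw x = m + bw x := by rw [add_comm] at h2; exact h2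
  exact add_right_cancel h3

set_option linter.unusedSectionVars false

lemma sub_theta_mem (θ : MvPolynomial (Fin 4) k →ₐ[k] MvPolynomial (Fin 4) k)
    (I : Ideal (MvPolynomial (Fin 4) k)) (hθ : ∀ x, X x - θ (X x) ∈ I)
    (f : MvPolynomial (Fin 4) k) : f - θ f ∈ I := by
  induction f using MvPolynomial.induction_on with
  | C a =>
      have : θ (C a) = C a := by
        rw [← MvPolynomial.algebraMap_eq]; exact θ.commutes a
      rw [this, sub_self]; exact I.zero_mem
  | add p q hp hq =>
      have := I.add_mem hp hq
      convert this using 1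
      rw [map_add]; ring
  | mul_X p x hp =>
      have h1 : (p - θ p) * θ (X x) ∈ I := I.mul_mem_right _ hp
      have h2 : p * (X x - θ (X x)) ∈ I := I.mul_mem_left _ (hθ x)
      have := I.add_mem h1 h2
      convert this using 1
      rw [map_mul]; ring

lemma prime_X4 (x : Fin 4) : Prime (X x : MvPolynomial (Fin 4) k) := by
  classical
  set θ : MvPolynomial (Fin 4) k →ₐ[k] MvPolynomial (Fin 4) k :=
    aeval (fun y => if y = x then 0 else X y) with hθdef
  have hz : θ (X x) = 0 := by simp [hθdef]
  have key : ∀ f, θ f = 0 → (X x : MvPolynomial (Fin 4) k) ∣ f := by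
    intro f hf
    have h0 : ∀ y, X y - θ (X y) ∈ Ideal.span {(X x : MvPolynomial (Fin 4) k)} := by
      intro y
      by_cases hy : y = x
      · subst hy; rw [hz, sub_zero]; exact Ideal.subset_span rfl
      · simp [hθdef, hy]
    have := sub_theta_mem k θ _ h0 f
    rwa [hf, sub_zero, Ideal.mem_span_singleton] at this
  refine ⟨X_ne_zero x, fun hu => ?_, fun a b hab => ?_⟩
  · have := hu.map θ
    rw [hz] at this
    exact not_isUnit_zero this
  · obtain ⟨c, hc⟩ := hab
    have h2 : θ a * θ b = 0 := by
      have := congrArg θ hc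
      rw [map_mul, map_mul, hz, zero_mul] at this
      exact this
    rcases mul_eq_zero.mp h2 with h | h
    · exact Or.inl (key a h)
    · exact Or.inr (key b h)

lemma not_X1_dvd_X0 : ¬ (X 1 : MvPolynomial (Fin 4) k) ∣ X 0 := by
  rintro ⟨c, hc⟩
  have := congrArg (MvPolynomial.eval fun y : Fin 4 => if y = 0 then (1 : k) else 0) hc
  simp at this

def psi (a b : Fin 2 → k) : MvPolynomial (Fin 4) k →ₐ[k] MvPolynomial (Fin 2) k :=
  aeval ![C (a 0) * X 0, C (a 1) * X 0, C (b 0) * X 1, C (b 1) * X 1]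

lemma exists_retract (a : Fin 2 → k) (ha : a ≠ 0) (x y : Fin 4) :
    ∃ p : MvPolynomial (Fin 4) k,
      X x - C (a 0) * p ∈ Ideal.span {C (a 1) * X x - C (a 0) * X y} ∧
      X y - C (a 1) * p ∈ Ideal.span {C (a 1) * X x - C (a 0) * X y} := by
  by_cases h1 : a 1 = 0
  · have h0 : a 0 ≠ 0 := by
      intro h0; apply ha; funext i; fin_cases i <;> simp [h0, h1]
    have hC : C (a 0) * C (a 0)⁻¹ = (1 : MvPolynomial (Fin 4) k) := by
      rw [← C_mul, mul_inv_cancel₀ h0, C_1]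
    refine ⟨C (a 0)⁻¹ * X x, ?_, ?_⟩
    · rw [Ideal.mem_span_singleton']
      exact ⟨0, by linear_combination (X x : MvPolynomial (Fin 4) k) * hC⟩
    · rw [Ideal.mem_span_singleton']
      refine ⟨-C (a 0)⁻¹, ?_⟩
      rw [h1, C_0]
      linear_combination (X y : MvPolynomial (Fin 4) k) * hC
  · have hC : C (a 1) * C (a 1)⁻¹ = (1 : MvPolynomial (Fin 4) k) := by
      rw [← C_mul, mul_inv_cancel₀ h1, C_1]
    refine ⟨C (a 1)⁻¹ * X y, ?_, ?_⟩
    · rw [Ideal.mem_span_singleton']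
      exact ⟨C (a 1)⁻¹, by linear_combination (X x : MvPolynomial (Fin 4) k) * hC⟩
    · rw [Ideal.mem_span_singleton']
      exact ⟨0, by linear_combination (X y : MvPolynomial (Fin 4) k) * hC⟩

lemma ker_psi (a b : Fin 2 → k) (ha : a ≠ 0) (hb : b ≠ 0) :
    RingHom.ker (psi k a b) =
      Ideal.span {C (a 1) * X 0 - C (a 0) * X 1, C (b 1) * X 2 - C (b 0) * X 3} := by
  apply le_antisymm
  · obtain ⟨p, hp0, hp1⟩ := exists_retract k a ha 0 1
    obtain ⟨q, hq2, hq3⟩ := exists_retract k b hb 2 3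
    set I : Ideal (MvPolynomial (Fin 4) k) :=
      Ideal.span {C (a 1) * X 0 - C (a 0) * X 1, C (b 1) * X 2 - C (b 0) * X 3} with hI
    have hsub1 : Ideal.span {C (a 1) * X 0 - C (a 0) * X 1} ≤ I :=
      Ideal.span_mono (by simp)
    have hsub2 : Ideal.span {C (b 1) * X 2 - C (b 0) * X 3} ≤ I :=
      Ideal.span_mono (by simp)
    set ρ : MvPolynomial (Fin 2) k →ₐ[k] MvPolynomial (Fin 4) k := aeval ![p, q] with hρ
    set θ := ρ.comp (psi k a b) with hθ
    have hθx : ∀ x, X x - θ (X x) ∈ I := by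
      intro x
      fin_cases x
      · show X 0 - θ (X 0) ∈ I
        have : θ (X 0) = C (a 0) * p := by simp [hθ, hρ, psi]
        rw [this]; exact hsub1 hp0
      · show X 1 - θ (X 1) ∈ I
        have : θ (X 1) = C (a 1) * p := by simp [hθ, hρ, psi]
        rw [this]; exact hsub1 hp1
      · show X 2 - θ (X 2) ∈ I
        have : θ (X 2) = C (b 0) * q := by simp [hθ, hρ, psi]
        rw [this]; exact hsub2 hq2
      · show X 3 - θ (X 3) ∈ I
        have : θ (X 3) = C (b 1) * q := by simp [hθ, hρ, psi]
        rw [this]; exact hsub2 hq3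
    intro f hf
    have h1 := sub_theta_mem k θ I hθx f
    have h2 : θ f = 0 := by
      rw [hθ, AlgHom.comp_apply, RingHom.mem_ker.mp hf, map_zero]
    rwa [h2, sub_zero] at h1
  · rw [Ideal.span_le]
    rintro g hg
    simp only [Set.mem_insert_iff, Set.mem_singleton_iff] at hg
    rcases hg with rfl | rfl
    · exact RingHom.mem_ker.mpr (by simp [psi]; ring)
    · exact RingHom.mem_ker.mpr (by simp [psi]; ring)

lemma ptIdeal_eq_ker (P : Pt k) :
    ptIdeal k P = RingHom.ker (psi k P.1.rep P.2.rep) := by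
  rw [ker_psi k _ _ P.1.rep_nonzero P.2.rep_nonzero]
  rfl

lemma ptIdeal_prime (P : Pt k) : (ptIdeal k P).IsPrime := by
  rw [ptIdeal_eq_ker]
  exact RingHom.ker_isPrime _

lemma not_X01_mem (P : Pt k) : ¬ (X 0 ∈ ptIdeal k P ∧ X 1 ∈ ptIdeal k P) := by
  rw [ptIdeal_eq_ker]
  rintro ⟨h0, h1⟩
  rw [RingHom.mem_ker] at h0 h1
  simp only [psi, aeval_X] at h0 h1
  simp only [Matrix.cons_val_zero, Matrix.cons_val_one, Matrix.head_cons] at h0 h1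
  rcases mul_eq_zero.mp h0 with h | h
  · rcases mul_eq_zero.mp h1 with h' | h'
    · apply P.1.rep_nonzero
      funext i
      fin_cases i
      · simpa using C_eq_zero.mp h
      · simpa using C_eq_zero.mp h'
    · exact X_ne_zero _ h'
  · exact X_ne_zero _ h

lemma mem_ptIdeal_of (P : Pt k) (h : MvPolynomial (Fin 4) k)
    (h0 : X 0 * h ∈ ptIdeal k P) (h1 : X 1 * h ∈ ptIdeal k P) : h ∈ ptIdeal k P := by
  have hp := ptIdeal_prime k P
  rcases hp.mem_or_mem h0 with hx | hh
  · rcases hp.mem_or_mem h1 with hy | hh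
    · exact absurd ⟨hx, hy⟩ (not_X01_mem k P)
    · exact hh
  · exact hh

lemma mem_idealX_of (Xpts : Finset (Pt k)) (h : MvPolynomial (Fin 4) k)
    (h0 : X 0 * h ∈ idealX k Xpts) (h1 : X 1 * h ∈ idealX k Xpts) : h ∈ idealX k Xpts := by
  simp only [idealX, Ideal.mem_iInf] at h0 h1 ⊢
  intro P
  exact fun hP => mem_ptIdeal_of k P h (h0 P hP) (h1 P hP)

lemma bw0 : bw 0 = ((1,0) : ℕ × ℕ) := rfl
lemma bw1 : bw 1 = ((1,0) : ℕ × ℕ) := rfl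

lemma mul_X0_mem_bideg (f : MvPolynomial (Fin 4) k) (i j : ℕ) (hf : f ∈ bideg k i j) :
    X 0 * f ∈ bideg k (i+1) j := by
  have h := (MvPolynomial.isWeightedHomogeneous_X k bw 0).mul
    ((MvPolynomial.mem_weightedHomogeneousSubmodule k bw _ f).mp hf)
  simp only [bideg, MvPolynomial.mem_weightedHomogeneousSubmodule]
  convert h using 1
  rw [bw0, Prod.ext_iff]
  constructor <;> simp [add_comm]

lemma mul_X1_mem_bideg (f : MvPolynomial (Fin 4) k) (i j : ℕ) (hf : f ∈ bideg k i j) :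
    X 1 * f ∈ bideg k (i+1) j := by
  have h := (MvPolynomial.isWeightedHomogeneous_X k bw 1).mul
    ((MvPolynomial.mem_weightedHomogeneousSubmodule k bw _ f).mp hf)
  simp only [bideg, MvPolynomial.mem_weightedHomogeneousSubmodule]
  convert h using 1
  rw [bw1, Prod.ext_iff]
  constructor <;> simp [add_comm]

lemma part1 (κ : ℕ) (hκ : 1 ≤ κ) (Xpts : Finset (Pt k)) (hX : GenericPts k Xpts (2 * κ))
    (i : ℕ) (hi : (i+1)*2 ≤ 2*κ) : pieceI k Xpts i 1 = ⊥ := by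
  haveI := fd_pieceI k Xpts i 1
  have h := hX.2 i 1
  rw [min_eq_left (by omega)] at h
  have : Module.finrank k (pieceI k Xpts i 1) = 0 := by omega
  exact Submodule.finrank_eq_zero.mp this

set_option maxHeartbeats 1000000 in
set_option synthInstance.maxHeartbeats 1000000 in
lemma step (κ : ℕ) (hκ : 1 ≤ κ) (Xpts : Finset (Pt k)) (hX : GenericPts k Xpts (2 * κ))
    (c : ℕ) (hc : κ ≤ c + 1) :
    pieceI k Xpts (c + 2) 1 = bump k (pieceI k Xpts (c + 1) 1) := by
  haveI hfdN := fd_pieceI k Xpts (c+1) 1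
  haveI hfdT := fd_pieceI k Xpts (c+2) 1
  haveI hfdK := fd_pieceI k Xpts c 1
  have hrN : Module.finrank k (pieceI k Xpts (c+1) 1) = 2*(c+2) - 2*κ := by
    have := hX.2 (c+1) 1; rw [min_eq_right (by omega)] at this; omega
  have hrT : Module.finrank k (pieceI k Xpts (c+2) 1) = 2*(c+3) - 2*κ := by
    have := hX.2 (c+2) 1; rw [min_eq_right (by omega)] at this; omega
  have hrK : Module.finrank k (pieceI k Xpts c 1) = 2*(c+1) - 2*κ := by
    have := hX.2 c 1
    rcases le_or_gt ((c+1)*2) (2*κ) with h | h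
    · rw [min_eq_left (by omega)] at this; omega
    · rw [min_eq_right (by omega)] at this; omega
  set N := pieceI k Xpts (c+1) 1 with hN
  set T := pieceI k Xpts (c+2) 1 with hT
  set K := pieceI k Xpts c 1 with hK
  set mS : MvPolynomial (Fin 4) k →ₗ[k] MvPolynomial (Fin 4) k := LinearMap.mulLeft k (X 0) with hmS
  set mT : MvPolynomial (Fin 4) k →ₗ[k] MvPolynomial (Fin 4) k := LinearMap.mulLeft k (X 1) with hmT
  set L : (N × N) →ₗ[k] MvPolynomial (Fin 4) k :=
    (mS.comp N.subtype).coprod (mT.comp N.subtype) with hL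
  have hrange : LinearMap.range L = bump k N := by
    rw [hL, LinearMap.range_coprod, LinearMap.range_comp, LinearMap.range_comp,
      Submodule.range_subtype, bump, Submodule.span_union,
      show (fun p : MvPolynomial (Fin 4) k => X 0 * p) = ⇑mS from rfl,
      show (fun p : MvPolynomial (Fin 4) k => X 1 * p) = ⇑mT from rfl,
      Submodule.span_image, Submodule.span_image, Submodule.span_eq]
  have hbump_le : bump k N ≤ T := by
    rw [bump, Submodule.span_le]
    rintro x (⟨f, hf, rfl⟩ | ⟨f, hf, rfl⟩)
    · obtain ⟨hfI, hfB⟩ := Submodule.mem_inf.mp hf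
      exact Submodule.mem_inf.mpr ⟨Ideal.mul_mem_left _ _ hfI, mul_X0_mem_bideg k f _ _ hfB⟩
    · obtain ⟨hfI, hfB⟩ := Submodule.mem_inf.mp hf
      exact Submodule.mem_inf.mpr ⟨Ideal.mul_mem_left _ _ hfI, mul_X1_mem_bideg k f _ _ hfB⟩
  have hN1 : ∀ h : K, X 1 * (h : MvPolynomial (Fin 4) k) ∈ N := by
    intro h
    obtain ⟨hI, hB⟩ := Submodule.mem_inf.mp h.2
    exact Submodule.mem_inf.mpr ⟨Ideal.mul_mem_left _ _ hI, mul_X1_mem_bideg k _ _ _ hB⟩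
  have hN0 : ∀ h : K, -(X 0 * (h : MvPolynomial (Fin 4) k)) ∈ N := by
    intro h
    obtain ⟨hI, hB⟩ := Submodule.mem_inf.mp h.2
    exact Submodule.neg_mem _
      (Submodule.mem_inf.mpr ⟨Ideal.mul_mem_left _ _ hI, mul_X0_mem_bideg k _ _ _ hB⟩)
  set e1 : K →ₗ[k] N := LinearMap.codRestrict N (mT.comp K.subtype) hN1 with he1
  set e2 : K →ₗ[k] N := LinearMap.codRestrict N (-(mS.comp K.subtype)) hN0 with he2
  have hLzero : ∀ h : K, L (e1 h, e2 h) = 0 := by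
    intro h
    show X 0 * (X 1 * (h : MvPolynomial (Fin 4) k)) + X 1 * (-(X 0 * (h : MvPolynomial (Fin 4) k))) = 0
    ring
  set e : K →ₗ[k] LinearMap.ker L :=
    LinearMap.codRestrict (LinearMap.ker L) (e1.prod e2)
      (fun h => LinearMap.mem_ker.mpr (hLzero h)) with he
  have hinj : Function.Injective e := by
    intro h h' hh
    have h2 : X 1 * (h : MvPolynomial (Fin 4) k) = X 1 * (h' : MvPolynomial (Fin 4) k) :=
      congrArg (fun z => (((z : LinearMap.ker L) : N × N).1 : MvPolynomial (Fin 4) k)) hh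
    exact Subtype.ext (mul_left_cancel₀ (X_ne_zero 1) h2)
  have hsurj : Function.Surjective e := by
    rintro ⟨⟨⟨f, hf⟩, ⟨g, hg⟩⟩, hker⟩
    have hker' : X 0 * f + X 1 * g = 0 := LinearMap.mem_ker.mp hker
    have hdvd : (X 1 : MvPolynomial (Fin 4) k) ∣ f := by
      have h1 : (X 1 : MvPolynomial (Fin 4) k) ∣ X 0 * f := ⟨-g, by linear_combination hker'⟩
      rcases (prime_X4 k 1).2.2 _ _ h1 with h | h
      · exact absurd h (not_X1_dvd_X0 k)
      · exact h
    obtain ⟨h, rfl⟩ := hdvd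
    have hg2 : g = -(X 0 * h) := by
      have h2 : X 1 * (X 0 * h + g) = 0 := by linear_combination hker'
      have h3 := (mul_eq_zero.mp h2).resolve_left (X_ne_zero 1)
      exact eq_neg_of_add_eq_zero_right h3
    obtain ⟨hfI, hfB⟩ := Submodule.mem_inf.mp hf
    obtain ⟨hgI, hgB⟩ := Submodule.mem_inf.mp hg
    have hhI : h ∈ idealX k Xpts := by
      apply mem_idealX_of k Xpts h
      · have h4 : -(-(X 0 * h)) ∈ idealX k Xpts := by
          rw [hg2] at hgI; exact (idealX k Xpts).neg_mem hgI
        rwa [neg_neg] at h4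
      · exact hfI
    have hhB : h ∈ bideg k c 1 := by
      have h5 : MvPolynomial.IsWeightedHomogeneous bw (X 1 * h) (((c : ℕ), (1 : ℕ)) + bw 1) := by
        have := hfB
        simp only [bideg, MvPolynomial.mem_weightedHomogeneousSubmodule] at this
        exact this
      exact homog_of_X_mul k 1 h (c, 1) h5
    refine ⟨⟨h, Submodule.mem_inf.mpr ⟨hhI, hhB⟩⟩, ?_⟩
    apply Subtype.ext
    refine Prod.ext (Subtype.ext rfl) (Subtype.ext ?_)
    show -(X 0 * h) = g
    rw [hg2]
  have hKer : Module.finrank k (LinearMap.ker L) = Module.finrank k K :=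
    (LinearEquiv.ofBijective e ⟨hinj, hsurj⟩).finrank_eq.symm
  have hrank := LinearMap.finrank_range_add_finrank_ker L
  rw [hrange, hKer, Module.finrank_prod, hrN, hrK] at hrank
  exact (Submodule.eq_of_le_of_finrank_le hbump_le (by rw [hrT]; omega)).symm

theorem stmt1' {k : Type} [Field k] [IsAlgClosed k] [CharZero k] (κ : ℕ) (hκ : 1 ≤ κ)
    (Xpts : Finset (Pt k)) (hX : GenericPts k Xpts (2 * κ)) :
    (∀ i < κ, pieceI k Xpts i 1 = ⊥) ∧
    (Module.finrank k ↥(pieceI k Xpts κ 1) = 2) ∧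
    (∀ a, κ ≤ a → pieceI k Xpts (a + 1) 1 = bump k (pieceI k Xpts a 1)) ∧
    (∃ g₁ g₂ : MvPolynomial (Fin 4) k,
      g₁ ∈ pieceI k Xpts κ 1 ∧ g₂ ∈ pieceI k Xpts κ 1 ∧
      LinearIndependent k ![g₁, g₂] ∧
      ∀ (i : ℕ) (f : MvPolynomial (Fin 4) k), f ∈ pieceI k Xpts i 1 →
        ∃ p q : MvPolynomial (Fin 4) k, p ∈ Kst k ∧ q ∈ Kst k ∧ f = p * g₁ + q * g₂) := by
  have hpart1 : ∀ i < κ, pieceI k Xpts i 1 = ⊥ := fun i hi =>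
    part1 k κ hκ Xpts hX i (by omega)
  have hpart2 : Module.finrank k (pieceI k Xpts κ 1) = 2 := by
    have := hX.2 κ 1; rw [min_eq_right (by omega)] at this; omega
  have hpart3 : ∀ a, κ ≤ a → pieceI k Xpts (a+1) 1 = bump k (pieceI k Xpts a 1) := by
    intro a ha
    obtain ⟨c, rfl⟩ : ∃ c, a = c + 1 := ⟨a - 1, by omega⟩
    exact step k κ hκ Xpts hX c (by omega)
  refine ⟨hpart1, hpart2, hpart3, ?_⟩
  haveI := fd_pieceI k Xpts κ 1
  let b : Module.Basis (Fin 2) k (pieceI k Xpts κ 1) := Module.finBasisOfFinrankEq k _ hpart2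
  set g₁ : MvPolynomial (Fin 4) k := (b 0 : MvPolynomial (Fin 4) k) with hg₁
  set g₂ : MvPolynomial (Fin 4) k := (b 1 : MvPolynomial (Fin 4) k) with hg₂
  have hC : ∀ c : k, C c ∈ Kst k := fun c => by
    simpa [← MvPolynomial.algebraMap_eq] using (Kst k).algebraMap_mem c
  have hX0 : (X 0 : MvPolynomial (Fin 4) k) ∈ Kst k :=
    Algebra.subset_adjoin (Set.mem_insert _ _)
  have hX1 : (X 1 : MvPolynomial (Fin 4) k) ∈ Kst k :=
    Algebra.subset_adjoin (Set.mem_insert_of_mem _ rfl)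
  refine ⟨g₁, g₂, (b 0).2, (b 1).2, ?_, ?_⟩
  · have hli : LinearIndependent k (fun i : Fin 2 => ((b i : pieceI k Xpts κ 1) :
        MvPolynomial (Fin 4) k)) :=
      b.linearIndependent.map' (pieceI k Xpts κ 1).subtype (Submodule.ker_subtype _)
    have heq : ![g₁, g₂] = fun i : Fin 2 => ((b i : pieceI k Xpts κ 1) :
        MvPolynomial (Fin 4) k) := by
      funext i; fin_cases i <;> rfl
    rw [heq]; exact hli
  · let G : Submodule k (MvPolynomial (Fin 4) k) :=
      { carrier := {f | ∃ p q, p ∈ Kst k ∧ q ∈ Kst k ∧ f = p * g₁ + q * g₂}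
        add_mem' := by
          rintro x y ⟨p, q, hp, hq, rfl⟩ ⟨p', q', hp', hq', rfl⟩
          exact ⟨p + p', q + q', add_mem hp hp', add_mem hq hq', by ring⟩
        zero_mem' := ⟨0, 0, zero_mem _, zero_mem _, by ring⟩
        smul_mem' := by
          rintro c x ⟨p, q, hp, hq, rfl⟩
          refine ⟨C c * p, C c * q, mul_mem (hC c) hp, mul_mem (hC c) hq, ?_⟩
          rw [MvPolynomial.smul_eq_C_mul]; ring }
    have key : ∀ i, pieceI k Xpts i 1 ≤ G := by
      intro i
      induction i using Nat.strong_induction_on with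
      | _ i ih =>
        rcases lt_trichotomy i κ with h | h | h
        · rw [hpart1 i h]; exact bot_le
        · subst h
          intro f hf
          have hrepr := b.sum_repr ⟨f, hf⟩
          rw [Fin.sum_univ_two] at hrepr
          have hval := congrArg (Subtype.val) hrepr
          simp only [Submodule.coe_add, SetLike.val_smul] at hval
          refine ⟨C ((b.repr ⟨f, hf⟩) 0), C ((b.repr ⟨f, hf⟩) 1), hC _, hC _, ?_⟩
          rw [← MvPolynomial.smul_eq_C_mul, ← MvPolynomial.smul_eq_C_mul]
          exact hval.symm
        · obtain ⟨a, rfl⟩ : ∃ a, i = a + 1 := ⟨i - 1, by omega⟩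
          rw [hpart3 a (by omega), bump, Submodule.span_le]
          rintro x (⟨f, hf, rfl⟩ | ⟨f, hf, rfl⟩)
          · obtain ⟨p, q, hp, hq, rfl⟩ := ih a (by omega) hf
            exact ⟨X 0 * p, X 0 * q, mul_mem hX0 hp, mul_mem hX0 hq, by ring⟩
          · obtain ⟨p, q, hp, hq, rfl⟩ := ih a (by omega) hf
            exact ⟨X 1 * p, X 1 * q, mul_mem hX1 hp, mul_mem hX1 hq, by ring⟩
    exact fun i f hf => key i hf

theorem stmt1 {k : Type} [Field k] [IsAlgClosed k] [CharZero k] (κ : ℕ) (hκ : 1 ≤ κ)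
    (Xpts : Finset (Pt k)) (hX : GenericPts k Xpts (2 * κ)) :
    (∀ i < κ, pieceI k Xpts i 1 = ⊥) ∧
    (Module.finrank k ↥(pieceI k Xpts κ 1) = 2) ∧
    (∀ a, κ ≤ a → pieceI k Xpts (a + 1) 1 = bump k (pieceI k Xpts a 1)) ∧
    (∃ g₁ g₂ : MvPolynomial (Fin 4) k,
      g₁ ∈ pieceI k Xpts κ 1 ∧ g₂ ∈ pieceI k Xpts κ 1 ∧
      LinearIndependent k ![g₁, g₂] ∧
      ∀ (i : ℕ) (f : MvPolynomial (Fin 4) k), f ∈ pieceI k Xpts i 1 →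
        ∃ p q : MvPolynomial (Fin 4) k, p ∈ Kst k ∧ q ∈ Kst k ∧ f = p * g₁ + q * g₂) := by
  exact stmt1' κ hκ Xpts hX
end
end

section
/- Let X be a generic set of r = 2k points in P^1 x P^1, and let g_1, g_2 be a k-basis of (I_X)_{(k,1)}. Then for every a ≥ k, setting j = a − k, the 2(j+1) elements s^j g_1, s^{j−1} t g_1, ..., t^j g_1, s^j g_2, s^{j−1} t g_2, ..., t^j g_2 form a k-basis of (I_X)_{(a,1)}; in particular dim_k (I_X)_{(a,1)} = 2(a − k) + 2. -/
open MvPolynomial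

noncomputable section
set_option linter.unusedSectionVars false
set_option maxHeartbeats 1000000

namespace AuxStmt3

variable {k : Type} [Field k] {σ : Type} [Fintype σ]

variable (k σ) in
/-- The grading map `f ↦ Σ_d f_d z^d` into `(MvPolynomial σ k)[z]`. -/
def Psi (w : σ → ℕ) : MvPolynomial σ k →ₐ[k] Polynomial (MvPolynomial σ k) :=
  MvPolynomial.aeval (fun i => Polynomial.C (MvPolynomial.X i) * Polynomial.X ^ w i)

lemma Psi_monomial (w : σ → ℕ) (d : σ →₀ ℕ) (c : k) :
    Psi k σ w (monomial d c) =
      Polynomial.C (monomial d c) * Polynomial.X ^ (Finsupp.weight w d) := by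
  classical
  rw [Psi, aeval_monomial, Finsupp.prod]
  have h1 : ∀ i ∈ d.support,
      (Polynomial.C (MvPolynomial.X (R := k) i) * Polynomial.X ^ w i) ^ d i
      = Polynomial.C (MvPolynomial.X (R := k) i ^ d i) * Polynomial.X ^ (d i * w i) := by
    intro i _
    rw [mul_pow, ← Polynomial.C_pow, ← pow_mul, Nat.mul_comm]
  rw [Finset.prod_congr rfl h1, Finset.prod_mul_distrib, ← map_prod, Finset.prod_pow_eq_pow_sum]
  have h2 : (Finsupp.weight w d : ℕ) = ∑ i ∈ d.support, d i * w i := by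
    rw [Finsupp.weight_apply, Finsupp.sum]
    simp [smul_eq_mul]
  rw [h2, monomial_eq, Finsupp.prod]
  simp only [Polynomial.algebraMap_apply, algebraMap_eq, map_mul]
  ring


lemma Psi_coeff (w : σ → ℕ) (f : MvPolynomial σ k) (n : ℕ) :
    (Psi k σ w f).coeff n = weightedHomogeneousComponent w n f := by
  classical
  induction f using MvPolynomial.induction_on' with
  | monomial d c =>
    rw [Psi_monomial]
    ext d'
    rw [coeff_weightedHomogeneousComponent]
    rw [Polynomial.coeff_C_mul, Polynomial.coeff_X_pow]
    simp only [apply_ite (coeff d'), coeff_monomial, coeff_zero]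
    by_cases h1 : d' = d
    · subst h1; split_ifs <;> simp_all
    · split_ifs <;> simp_all [Ne.symm h1]
  | add p q hp hq =>
    rw [map_add, Polynomial.coeff_add, map_add, hp, hq]


lemma Psi_of_isWeightedHomogeneous {w : σ → ℕ} {f : MvPolynomial σ k} {m : ℕ}
    (hf : IsWeightedHomogeneous w f m) :
    Psi k σ w f = Polynomial.C f * Polynomial.X ^ m := by
  classical
  ext n
  rw [Psi_coeff, Polynomial.coeff_C_mul, Polynomial.coeff_X_pow]
  by_cases h : n = m
  · subst h
    rw [IsWeightedHomogeneous.weightedHomogeneousComponent_same hf, if_pos rfl, mul_one]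
  · rw [IsWeightedHomogeneous.weightedHomogeneousComponent_ne _ hf h, if_neg h, mul_zero,
      coeff_zero]

lemma Psi_eval_one (w : σ → ℕ) (f : MvPolynomial σ k) :
    Polynomial.eval 1 (Psi k σ w f) = f := by
  induction f using MvPolynomial.induction_on' with
  | monomial d c => simp [Psi_monomial]
  | add p q hp hq => rw [map_add, Polynomial.eval_add, hp, hq]

lemma isWeightedHomogeneous_of_Psi {w : σ → ℕ} {f g : MvPolynomial σ k} {m : ℕ}
    (h : Psi k σ w f = Polynomial.C g * Polynomial.X ^ m) :
    IsWeightedHomogeneous w f m := by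
  classical
  intro d hd
  by_contra hne
  have h1 : coeff d (weightedHomogeneousComponent w (Finsupp.weight w d) f) = coeff d f := by
    rw [coeff_weightedHomogeneousComponent, if_pos rfl]
  rw [← Psi_coeff, h, Polynomial.coeff_C_mul, Polynomial.coeff_X_pow, if_neg hne] at h1
  simp at h1
  exact hd h1.symm

lemma poly_divisor {S : Type*} [CommRing S] [IsDomain S] (m : ℕ) (c : S) (hc : c ≠ 0) :
    ∀ A B : Polynomial S, A * B = Polynomial.C c * Polynomial.X ^ m →
      ∃ a i, A = Polynomial.C a * Polynomial.X ^ i := by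
  induction m with
  | zero =>
    intro A B hAB
    simp only [pow_zero, mul_one] at hAB
    have hC : Polynomial.C c ≠ 0 := by simpa using hc
    have hA : A ≠ 0 := fun h => hC (by rw [← hAB, h, zero_mul])
    have hB : B ≠ 0 := fun h => hC (by rw [← hAB, h, mul_zero])
    have hdeg : A.natDegree + B.natDegree = 0 := by
      rw [← Polynomial.natDegree_mul hA hB, hAB, Polynomial.natDegree_C]
    refine ⟨A.coeff 0, 0, ?_⟩
    rw [Polynomial.eq_C_of_natDegree_eq_zero (by omega : A.natDegree = 0)]
    simp
  | succ m ih =>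
    intro A B hAB
    have hX : Prime (Polynomial.X : Polynomial S) := Polynomial.prime_X
    have hdvd : (Polynomial.X : Polynomial S) ∣ A * B :=
      ⟨Polynomial.C c * Polynomial.X ^ m, by rw [hAB]; ring⟩
    rcases hX.2.2 _ _ hdvd with hA | hB
    · obtain ⟨A', rfl⟩ := hA
      have h2 : A' * B = Polynomial.C c * Polynomial.X ^ m := by
        apply mul_left_cancel₀ (Polynomial.X_ne_zero (R := S))
        linear_combination hAB
      obtain ⟨a, i, ha⟩ := ih A' B h2
      exact ⟨a, i + 1, by rw [ha]; ring⟩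
    · obtain ⟨B', rfl⟩ := hB
      have h2 : A * B' = Polynomial.C c * Polynomial.X ^ m := by
        apply mul_left_cancel₀ (Polynomial.X_ne_zero (R := S))
        linear_combination hAB
      exact ih A B' h2

/-- Divisors of weighted homogeneous polynomials are weighted homogeneous. -/
lemma isWeightedHomogeneous_of_mul {w : σ → ℕ} {p q : MvPolynomial σ k} {m : ℕ}
    (h : IsWeightedHomogeneous w (p * q) m) (hp : p ≠ 0) (hq : q ≠ 0) :
    ∃ m₁ m₂, m₁ + m₂ = m ∧ IsWeightedHomogeneous w p m₁ ∧ IsWeightedHomogeneous w q m₂ := by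
  have hpq : p * q ≠ 0 := mul_ne_zero hp hq
  have h1 : Psi k σ w p * Psi k σ w q = Polynomial.C (p * q) * Polynomial.X ^ m := by
    rw [← map_mul]; exact Psi_of_isWeightedHomogeneous h
  obtain ⟨a, i, hA⟩ := poly_divisor m (p * q) hpq _ _ h1
  obtain ⟨b, i', hB⟩ := poly_divisor m (p * q) hpq (Psi k σ w q) (Psi k σ w p)
    (by rw [← h1]; ring)
  have hpa : a = p := by
    have := Psi_eval_one w p
    rw [hA] at this
    simpa using this
  have hqb : b = q := by
    have := Psi_eval_one w q
    rw [hB] at this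
    simpa using this
  rw [hpa] at hA
  rw [hqb] at hB
  have hwp : IsWeightedHomogeneous w p i := isWeightedHomogeneous_of_Psi hA
  have hwq : IsWeightedHomogeneous w q i' := isWeightedHomogeneous_of_Psi hB
  exact ⟨i, i', IsWeightedHomogeneous.inj_right hpq (hwp.mul hwq) h, hwp, hwq⟩


end AuxStmt3

variable (k : Type) [Field k] [IsAlgClosed k] [CharZero k]

namespace AuxStmt3

variable {k : Type} [Field k]

def w1 : Fin 4 → ℕ := fun i => (bw i).1
def w2 : Fin 4 → ℕ := fun i => (bw i).2

lemma weight_w1 (d : Fin 4 →₀ ℕ) : Finsupp.weight w1 d = d 0 + d 1 := by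
  rw [Finsupp.weight_apply, Finsupp.sum_fintype _ _ (by simp)]
  rw [Fin.sum_univ_four]
  simp [w1, bw]

lemma weight_w2 (d : Fin 4 →₀ ℕ) : Finsupp.weight w2 d = d 2 + d 3 := by
  rw [Finsupp.weight_apply, Finsupp.sum_fintype _ _ (by simp)]
  rw [Fin.sum_univ_four]
  simp [w2, bw]

lemma weight_bw (d : Fin 4 →₀ ℕ) :
    Finsupp.weight bw d = (d 0 + d 1, d 2 + d 3) := by
  rw [Finsupp.weight_apply, Finsupp.sum_fintype _ _ (by simp)]
  rw [Fin.sum_univ_four]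
  simp [bw, Prod.ext_iff]


lemma isWH_bw_iff {f : MvPolynomial (Fin 4) k} {m : ℕ × ℕ} :
    IsWeightedHomogeneous bw f m ↔
      IsWeightedHomogeneous w1 f m.1 ∧ IsWeightedHomogeneous w2 f m.2 := by
  constructor
  · intro h
    constructor
    · intro d hd
      have := h hd
      rw [weight_bw] at this
      rw [weight_w1, ← this]
    · intro d hd
      have := h hd
      rw [weight_bw] at this
      rw [weight_w2, ← this]
  · rintro ⟨h1, h2⟩ d hd
    rw [weight_bw]
    have e1 := h1 hd
    have e2 := h2 hd
    rw [weight_w1] at e1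
    rw [weight_w2] at e2
    rw [e1, e2]

/-- Divisors of bihomogeneous polynomials are bihomogeneous. -/
lemma bw_divisor {p q : MvPolynomial (Fin 4) k} {m : ℕ × ℕ}
    (h : IsWeightedHomogeneous bw (p * q) m) (hp : p ≠ 0) (hq : q ≠ 0) :
    ∃ m₁ m₂ : ℕ × ℕ, m₁ + m₂ = m ∧
      IsWeightedHomogeneous bw p m₁ ∧ IsWeightedHomogeneous bw q m₂ := by
  rw [isWH_bw_iff] at h
  obtain ⟨i1, i2, hi, hp1, hq1⟩ := isWeightedHomogeneous_of_mul h.1 hp hq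
  obtain ⟨j1, j2, hj, hp2, hq2⟩ := isWeightedHomogeneous_of_mul h.2 hp hq
  exact ⟨(i1, j1), (i2, j2), by rw [Prod.mk_add_mk, hi, hj],
    isWH_bw_iff.2 ⟨hp1, hp2⟩, isWH_bw_iff.2 ⟨hq1, hq2⟩⟩

/-- A bihomogeneous polynomial of bidegree `(0,0)` is a constant. -/
lemma eq_C_of_bw_zero {f : MvPolynomial (Fin 4) k}
    (h : IsWeightedHomogeneous bw f (0, 0)) : ∃ c : k, f = C c := by
  classical
  refine ⟨coeff 0 f, ?_⟩
  ext d
  by_cases hd : d = 0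
  · subst hd; simp [coeff_C]
  · rw [coeff_C, if_neg (by exact fun h' => hd h'.symm)]
    by_contra hc
    have := h hc
    rw [weight_bw, Prod.ext_iff] at this
    simp only [Prod.fst, Prod.snd] at this
    apply hd
    ext i
    fin_cases i <;> simp <;> omega


/-- The difference `f - f(τ)` lies in the ideal generated by `X i - τ i`. -/
lemma sub_aeval_mem_span (τ : Fin 4 → MvPolynomial (Fin 4) k) (f : MvPolynomial (Fin 4) k) :
    f - aeval τ f ∈ Ideal.span (Set.range fun i => X i - τ i) := by
  induction f using MvPolynomial.induction_on with
  | C a => simp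
  | add p q hp hq =>
    rw [map_add]
    have : p + q - (aeval τ p + aeval τ q) = (p - aeval τ p) + (q - aeval τ q) := by ring
    rw [this]
    exact Ideal.add_mem _ hp hq
  | mul_X p i hp =>
    rw [map_mul, aeval_X]
    have : p * X i - aeval τ p * τ i
        = (p - aeval τ p) * X i + aeval τ p * (X i - τ i) := by ring
    rw [this]
    exact Ideal.add_mem _ (Ideal.mul_mem_right _ _ hp)
      (Ideal.mul_mem_left _ _ (Ideal.subset_span ⟨i, rfl⟩))

/-- The evaluation-style algebra map whose kernel is `ptIdeal P`. -/
def psiP (P : Pt k) : MvPolynomial (Fin 4) k →ₐ[k] MvPolynomial (Fin 2) k :=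
  aeval ![C (P.1.rep 0) * X 0, C (P.1.rep 1) * X 0, C (P.2.rep 0) * X 1, C (P.2.rep 1) * X 1]

lemma psiP_hForm (P : Pt k) : psiP P (hForm k P.1) = 0 := by
  simp [psiP, hForm]
  ring

lemma psiP_lForm (P : Pt k) : psiP P (lForm k P.2) = 0 := by
  simp [psiP, lForm]
  ring

lemma exists_norm (a : Fin 2 → k) (ha : a ≠ 0) : ∃ c0 c1 : k, a 1 * c0 - a 0 * c1 = 1 := by
  by_cases h1 : a 1 ≠ 0
  · exact ⟨(a 1)⁻¹, 0, by field_simp; ring⟩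
  · have h0 : a 0 ≠ 0 := by
      intro h0
      apply ha
      ext i
      fin_cases i
      · exact h0
      · simpa using h1
    refine ⟨0, -(a 0)⁻¹, by push_neg at h1; rw [h1]; field_simp; ring⟩

lemma ptIdeal_eq_ker (P : Pt k) : ptIdeal k P = RingHom.ker (psiP P) := by
  apply le_antisymm
  · rw [ptIdeal, Ideal.span_le]
    rintro x hx
    simp only [Set.mem_insert_iff, Set.mem_singleton_iff] at hx
    rcases hx with rfl | rfl
    · exact psiP_hForm P
    · exact psiP_lForm P
  · intro f hf
    obtain ⟨c0, c1, hc⟩ := exists_norm P.1.rep P.1.rep_nonzero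
    obtain ⟨d0, d1, hd⟩ := exists_norm P.2.rep P.2.rep_nonzero
    set G : MvPolynomial (Fin 4) k := C c0 * X 1 - C c1 * X 0 with hG
    set L : MvPolynomial (Fin 4) k := C d0 * X 3 - C d1 * X 2 with hL
    set τ : Fin 4 → MvPolynomial (Fin 4) k :=
      ![C (P.1.rep 0) * G, C (P.1.rep 1) * G, C (P.2.rep 0) * L, C (P.2.rep 1) * L] with hτ
    have hCc : C (P.1.rep 1) * C c0 - C (P.1.rep 0) * C c1 = (1 : MvPolynomial (Fin 4) k) := by
      rw [← C_mul, ← C_mul, ← C_sub, hc, C_1]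
    have hCd : C (P.2.rep 1) * C d0 - C (P.2.rep 0) * C d1 = (1 : MvPolynomial (Fin 4) k) := by
      rw [← C_mul, ← C_mul, ← C_sub, hd, C_1]
    have hm0 : X 0 - τ 0 ∈ ptIdeal k P := by
      have : X 0 - τ 0 = C c0 * hForm k P.1 := by
        simp only [hτ, hG, hForm, Matrix.cons_val_zero]
        linear_combination (-(X 0 : MvPolynomial (Fin 4) k)) * hCc
      rw [this]
      exact Ideal.mul_mem_left _ _ (Ideal.subset_span (by simp [ptIdeal]))
    have hm1 : X 1 - τ 1 ∈ ptIdeal k P := by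
      have : X 1 - τ 1 = C c1 * hForm k P.1 := by
        simp only [hτ, hG, hForm, Matrix.cons_val_one, Matrix.head_cons, Matrix.cons_val_zero]
        linear_combination (-(X 1 : MvPolynomial (Fin 4) k)) * hCc
      rw [this]
      exact Ideal.mul_mem_left _ _ (Ideal.subset_span (by simp [ptIdeal]))
    have hm2 : X 2 - τ 2 ∈ ptIdeal k P := by
      have : X 2 - τ 2 = C d0 * lForm k P.2 := by
        show (X 2 : MvPolynomial (Fin 4) k) - C (P.2.rep 0) * L = _
        simp only [hL, lForm]
        linear_combination (-(X 2 : MvPolynomial (Fin 4) k)) * hCd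
      rw [this]
      exact Ideal.mul_mem_left _ _ (Ideal.subset_span (by simp [ptIdeal]))
    have hm3 : X 3 - τ 3 ∈ ptIdeal k P := by
      have : X 3 - τ 3 = C d1 * lForm k P.2 := by
        show (X 3 : MvPolynomial (Fin 4) k) - C (P.2.rep 1) * L = _
        simp only [hL, lForm]
        linear_combination (-(X 3 : MvPolynomial (Fin 4) k)) * hCd
      rw [this]
      exact Ideal.mul_mem_left _ _ (Ideal.subset_span (by simp [ptIdeal]))
    have hmem : ∀ i, X i - τ i ∈ ptIdeal k P := by
      intro i
      fin_cases i
      exacts [hm0, hm1, hm2, hm3]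
    have hspan : Ideal.span (Set.range fun i => X i - τ i) ≤ ptIdeal k P := by
      rw [Ideal.span_le]
      rintro x ⟨i, rfl⟩
      exact hmem i
    have hcomp : aeval τ f = aeval ![G, L] (psiP P f) := by
      have : (aeval ![G, L]).comp (psiP P) = aeval τ := by
        apply MvPolynomial.algHom_ext
        intro i
        fin_cases i <;> simp [psiP, hτ]
      rw [← this, AlgHom.comp_apply]
    have hzero : aeval τ f = 0 := by
      rw [hcomp, hf]
      · simp
    have := sub_aeval_mem_span τ f
    rw [hzero, sub_zero] at this
    exact hspan this

lemma ptIdeal_isPrime (P : Pt k) : (ptIdeal k P).IsPrime := by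
  rw [ptIdeal_eq_ker]
  exact RingHom.ker_isPrime _


/-- A bihomogeneous polynomial of bidegree `(e,0)` only involves `s,t` and is fixed by
substitutions fixing `X 0` and `X 1`. -/
lemma aeval_fix {f : MvPolynomial (Fin 4) k} {e : ℕ} (hf : IsWeightedHomogeneous bw f (e, 0))
    (σ : Fin 4 → MvPolynomial (Fin 4) k) (h0 : σ 0 = X 0) (h1 : σ 1 = X 1) :
    aeval σ f = f := by
  conv_rhs => rw [f.as_sum]
  conv_lhs => rw [f.as_sum]
  rw [map_sum]
  apply Finset.sum_congr rfl
  intro d hd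
  have hw := hf (mem_support_iff.mp hd)
  rw [weight_bw, Prod.ext_iff] at hw
  have h23 : d 2 = 0 ∧ d 3 = 0 := by
    constructor <;> omega
  rw [aeval_monomial, monomial_eq, algebraMap_eq]
  congr 1
  apply Finsupp.prod_congr
  intro i hi
  have hdi : d i ≠ 0 := Finsupp.mem_support_iff.mp hi
  fin_cases i
  · show σ 0 ^ d 0 = X 0 ^ d 0
    rw [h0]
  · show σ 1 ^ d 1 = X 1 ^ d 1
    rw [h1]
  · exact absurd h23.1 hdi
  · exact absurd h23.2 hdi

lemma Xpow_pair (α β : ℕ) : (X 0 : MvPolynomial (Fin 4) k) ^ α * X 1 ^ β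
    = monomial (Finsupp.single 0 α + Finsupp.single 1 β) 1 := by
  rw [X_pow_eq_monomial, X_pow_eq_monomial, monomial_mul, one_mul]

lemma isWH_Xpow_pair (α β : ℕ) :
    IsWeightedHomogeneous bw ((X 0 : MvPolynomial (Fin 4) k) ^ α * X 1 ^ β) ((α + β, 0) : ℕ × ℕ) := by
  rw [Xpow_pair]
  apply isWeightedHomogeneous_monomial
  rw [weight_bw]
  simp [Finsupp.single_apply]

/-- The standard monomials of bidegree `(a, 1)`. -/
def monFam (a : ℕ) : Fin (a + 1) × Fin 2 → MvPolynomial (Fin 4) k := fun p =>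
  X 0 ^ (a - (p.1 : ℕ)) * X 1 ^ (p.1 : ℕ) * ![X 2, X 3] p.2

lemma bideg_le_span (a : ℕ) :
    bideg k a 1 ≤ Submodule.span k (Set.range (monFam (k := k) a)) := by
  intro f hf
  have hf' : IsWeightedHomogeneous bw f (a, 1) := hf
  rw [f.as_sum]
  apply Submodule.sum_mem
  intro d hd
  have hw := hf' (mem_support_iff.mp hd)
  rw [weight_bw, Prod.ext_iff] at hw
  have h01 : d 0 + d 1 = a := by simpa using hw.1
  have h23 : d 2 + d 3 = 1 := by simpa using hw.2
  have hmono : (monomial d) (coeff d f) = coeff d f • (monomial d) 1 := by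
    rw [smul_monomial, smul_eq_mul, mul_one]
  rw [hmono]
  apply Submodule.smul_mem
  apply Submodule.subset_span
  have hX2 : (X 2 : MvPolynomial (Fin 4) k) = monomial (Finsupp.single 2 1) 1 := by
    rw [← X_pow_eq_monomial, pow_one]
  have hX3 : (X 3 : MvPolynomial (Fin 4) k) = monomial (Finsupp.single 3 1) 1 := by
    rw [← X_pow_eq_monomial, pow_one]
  rcases (by omega : d 2 = 1 ∧ d 3 = 0 ∨ d 2 = 0 ∧ d 3 = 1) with h | h
  · refine ⟨(⟨d 1, by omega⟩, 0), ?_⟩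
    show X 0 ^ (a - d 1) * X 1 ^ (d 1) * X 2 = _
    have hE : Finsupp.single (0 : Fin 4) (a - d 1) + Finsupp.single 1 (d 1)
        + Finsupp.single 2 1 = d := by
      ext i
      fin_cases i <;> simp [Finsupp.single_apply] <;> omega
    rw [Xpow_pair, hX2, monomial_mul, one_mul, hE]
  · refine ⟨(⟨d 1, by omega⟩, 1), ?_⟩
    show X 0 ^ (a - d 1) * X 1 ^ (d 1) * X 3 = _
    have hE : Finsupp.single (0 : Fin 4) (a - d 1) + Finsupp.single 1 (d 1)
        + Finsupp.single 3 1 = d := by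
      ext i
      fin_cases i <;> simp [Finsupp.single_apply] <;> omega
    rw [Xpow_pair, hX3, monomial_mul, one_mul, hE]



instance findim_bideg (a : ℕ) : FiniteDimensional k (bideg k a 1) := by
  have h1 : FiniteDimensional k (Submodule.span k (Set.range (monFam (k := k) a))) :=
    FiniteDimensional.span_of_finite k (Set.finite_range _)
  exact Submodule.finiteDimensional_of_le (bideg_le_span a)

instance findim_pieceI (Xpts : Finset (Pt k)) (a : ℕ) :
    FiniteDimensional k (pieceI k Xpts a 1) :=
  Submodule.finiteDimensional_of_le (inf_le_right : _ ≤ bideg k a 1)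

lemma finrank_bideg_le (a : ℕ) : Module.finrank k (bideg k a 1) ≤ (a + 1) * 2 := by
  have h1 : FiniteDimensional k (Submodule.span k (Set.range (monFam (k := k) a))) :=
    FiniteDimensional.span_of_finite k (Set.finite_range _)
  refine (Submodule.finrank_mono (bideg_le_span (k := k) a)).trans ?_
  refine (finrank_range_le_card (monFam (k := k) a)).trans ?_
  simp

lemma sum_Xpow_eq_zero {n : ℕ} {c : Fin (n + 1) → k}
    (h : ∑ i : Fin (n + 1), C (c i) * (X 0 ^ (n - (i : ℕ)) * X 1 ^ (i : ℕ))
      = (0 : MvPolynomial (Fin 4) k)) :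
    ∀ i, c i = 0 := by
  classical
  intro i0
  set E : Fin (n + 1) → (Fin 4 →₀ ℕ) :=
    fun i => Finsupp.single 0 (n - (i : ℕ)) + Finsupp.single 1 (i : ℕ) with hE
  have hinj : Function.Injective E := by
    intro i j hij
    have := congrArg (fun d => d 1) hij
    simp only [hE, Finsupp.add_apply, Finsupp.single_apply] at this
    ext
    simpa using this
  have hc := congrArg (coeff (E i0)) h
  rw [coeff_sum] at hc
  have hterm : ∀ i : Fin (n + 1),
      coeff (E i0) (C (c i) * (X 0 ^ (n - (i : ℕ)) * X 1 ^ (i : ℕ)))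
        = if i = i0 then c i else 0 := by
    intro i
    rw [Xpow_pair, C_mul_monomial, mul_one, coeff_monomial]
    by_cases hii : i = i0
    · subst hii
      rw [hE, if_pos rfl, if_pos rfl]
    · rw [if_neg (fun hEE => hii (hinj hEE)), if_neg hii]
  rw [Finset.sum_congr rfl (fun i _ => hterm i), Finset.sum_ite_eq' Finset.univ i0 c] at hc
  simpa using hc


variable {κ : ℕ} {Xpts : Finset (Pt k)}

lemma pieceI_eq_bot (hX : GenericPts k Xpts (2 * κ)) {e : ℕ} (he : e < κ) :
    pieceI k Xpts e 1 = ⊥ := by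
  have h := hX.2 e 1
  have hmin : min ((e + 1) * (1 + 1)) (2 * κ) = (e + 1) * (1 + 1) := by
    apply min_eq_left
    omega
  rw [hmin] at h
  have hf : Module.finrank k (pieceI k Xpts e 1) = 0 := by omega
  rwa [Submodule.finrank_eq_zero] at hf

lemma mem_ptIdeal_of_mem_idealX {f : MvPolynomial (Fin 4) k} (hf : f ∈ idealX k Xpts)
    {P0 : Pt k} (hP0 : P0 ∈ Xpts) : f ∈ ptIdeal k P0 := by
  rw [idealX, Ideal.mem_iInf] at hf
  have := hf P0
  rw [Ideal.mem_iInf] at this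
  exact this hP0

/-- The key algebraic fact: `g₁, g₂` admit no nontrivial relation with coefficients
in `k[s,t]`. -/
lemma key_claim (hX : GenericPts k Xpts (2 * κ))
    {g₁ g₂ : MvPolynomial (Fin 4) k}
    (hg₁ : g₁ ∈ pieceI k Xpts κ 1) (hg₂ : g₂ ∈ pieceI k Xpts κ 1)
    (hli : LinearIndependent k ![g₁, g₂])
    {P Q : MvPolynomial (Fin 4) k} {j : ℕ}
    (hP : IsWeightedHomogeneous bw P ((j, 0) : ℕ × ℕ))
    (hQ : IsWeightedHomogeneous bw Q ((j, 0) : ℕ × ℕ))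
    (hrel : P * g₁ + Q * g₂ = 0) : P = 0 ∧ Q = 0 := by
  have hg1ne : g₁ ≠ 0 := by
    have := hli.ne_zero 0
    simpa using this
  have hg2ne : g₂ ≠ 0 := by
    have := hli.ne_zero 1
    simpa using this
  have pair := LinearIndependent.pair_iff.mp hli
  by_cases hP0 : P = 0
  · subst hP0
    rw [zero_mul, zero_add] at hrel
    rcases mul_eq_zero.mp hrel with h | h
    · exact ⟨rfl, h⟩
    · exact absurd h hg2ne
  by_cases hQ0 : Q = 0
  · subst hQ0
    rw [zero_mul, add_zero] at hrel
    rcases mul_eq_zero.mp hrel with h | h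
    · exact ⟨h, rfl⟩
    · exact absurd h hg1ne
  exfalso
  obtain ⟨P', Q', c, hcop, hcP, hcQ⟩ :=
    UniqueFactorizationMonoid.exists_reduced_factors P hP0 Q
  have hcne : c ≠ 0 := fun h => hP0 (by rw [← hcP, h, zero_mul])
  have hP'ne : P' ≠ 0 := fun h => hP0 (by rw [← hcP, h, mul_zero])
  have hQ'ne : Q' ≠ 0 := fun h => hQ0 (by rw [← hcQ, h, mul_zero])
  have hrel' : P' * g₁ + Q' * g₂ = 0 := by
    apply mul_left_cancel₀ hcne
    rw [mul_zero, mul_add, ← mul_assoc, ← mul_assoc, hcP, hcQ]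
    exact hrel
  have hQ'dvd : Q' ∣ g₁ := by
    apply (hcop.symm).dvd_of_dvd_mul_left (y := P')
    exact ⟨-g₂, by linear_combination hrel'⟩
  obtain ⟨h, hg1⟩ := hQ'dvd
  have hhne : h ≠ 0 := fun hh => hg1ne (by rw [hg1, hh, mul_zero])
  have hg2 : g₂ = -P' * h := by
    have h1 : Q' * (g₂ - (-P' * h)) = 0 := by
      rw [hg1] at hrel'
      linear_combination hrel'
    rcases mul_eq_zero.mp h1 with h2 | h2
    · exact absurd h2 hQ'ne
    · have := sub_eq_zero.mp h2
      exact this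
  -- homogeneity bookkeeping
  have hg1w : IsWeightedHomogeneous bw g₁ ((κ, 1) : ℕ × ℕ) :=
    (mem_weightedHomogeneousSubmodule _ _ _ _).mp hg₁.2
  have hg2w : IsWeightedHomogeneous bw g₂ ((κ, 1) : ℕ × ℕ) :=
    (mem_weightedHomogeneousSubmodule _ _ _ _).mp hg₂.2
  obtain ⟨m1, m2, hm, hQ'w, hhw⟩ := bw_divisor (p := Q') (q := h)
    (by rw [← hg1]; exact hg1w) hQ'ne hhne
  have hQcw : IsWeightedHomogeneous bw (c * Q') ((j, 0) : ℕ × ℕ) := by rw [hcQ]; exact hQ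
  obtain ⟨m1', m2', hm', hcw, hQ'w2⟩ := bw_divisor hQcw hcne hQ'ne
  have hm1eq : m1 = m2' := IsWeightedHomogeneous.inj_right hQ'ne hQ'w hQ'w2
  have hm12 : m1.2 = 0 := by
    have h1 := congrArg Prod.snd hm'
    simp only [Prod.snd_add] at h1
    rw [hm1eq]
    omega
  -- P' is also bihomogeneous of bidegree (·, 0)
  have hPcw : IsWeightedHomogeneous bw (c * P') ((j, 0) : ℕ × ℕ) := by rw [hcP]; exact hP
  obtain ⟨n1', n2', hn', hcw2, hP'w⟩ := bw_divisor hPcw hcne hP'ne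
  have hn22 : n2'.2 = 0 := by
    have h1 := congrArg Prod.snd hn'
    simp only [Prod.snd_add] at h1
    omega
  -- weights of the relation g₂ = -P' * h
  have hnegP'w : IsWeightedHomogeneous bw (-P') n2' :=
    (mem_weightedHomogeneousSubmodule _ _ _ _).mp
      (Submodule.neg_mem _ ((mem_weightedHomogeneousSubmodule _ _ _ _).mpr hP'w))
  have hg2w' : IsWeightedHomogeneous bw (-P' * h) (n2' + m2) := hnegP'w.mul hhw
  have hsum2 : n2' + m2 = ((κ, 1) : ℕ × ℕ) :=
    IsWeightedHomogeneous.inj_right hg2ne (by rw [hg2]; exact hg2w') hg2w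
  have hm1' := congrArg Prod.fst hm
  have hm2' := congrArg Prod.snd hm
  have hs1 := congrArg Prod.fst hsum2
  simp only [Prod.fst_add, Prod.snd_add] at hm1' hm2' hs1
  -- m1.1 + m2.1 = κ, m1.2 + m2.2 = 1, n2'.1 + m2.1 = κ
  by_cases hd : m1.1 = 0
  · -- both P' and Q' are constants: contradicts linear independence
    have hQ'c : ∃ cq : k, Q' = C cq := eq_C_of_bw_zero (by
      have : m1 = ((0, 0) : ℕ × ℕ) := by
        rw [Prod.ext_iff]
        exact ⟨hd, hm12⟩
      rw [← this]
      exact hQ'w)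
    have hP'c : ∃ cp : k, P' = C cp := eq_C_of_bw_zero (by
      have : n2' = ((0, 0) : ℕ × ℕ) := by
        rw [Prod.ext_iff]
        constructor
        · simp only [Prod.fst]
          omega
        · exact hn22
      rw [← this]
      exact hP'w)
    obtain ⟨cq, rfl⟩ := hQ'c
    obtain ⟨cp, rfl⟩ := hP'c
    have hcq : cq ≠ 0 := fun hcq => hQ'ne (by rw [hcq, C_0])
    have hrel2 : cp • g₁ + cq • g₂ = 0 := by
      rw [smul_eq_C_mul, smul_eq_C_mul, hg1, hg2]
      ring
    exact hcq (pair cp cq hrel2).2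
  · -- h is an element of I_X of bidegree (m2.1, 1) with m2.1 < κ : contradiction
    have hmem : h ∈ idealX k Xpts := by
      rw [idealX, Ideal.mem_iInf]
      intro P0
      rw [Ideal.mem_iInf]
      intro hP0mem
      have hprime := ptIdeal_isPrime P0
      have hg1P : g₁ ∈ ptIdeal k P0 := mem_ptIdeal_of_mem_idealX hg₁.1 hP0mem
      have hg2P : g₂ ∈ ptIdeal k P0 := mem_ptIdeal_of_mem_idealX hg₂.1 hP0mem
      rw [hg1] at hg1P
      rw [hg2] at hg2P
      rcases hprime.mem_or_mem hg1P with hQ'P | hhP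
      swap
      · exact hhP
      rcases hprime.mem_or_mem hg2P with hP'P | hhP
      swap
      · exact hhP
      exfalso
      rw [show (-P' : MvPolynomial (Fin 4) k) = -1 * P' by ring] at hP'P
      have hP'P' : P' ∈ ptIdeal k P0 := by
        have := (ptIdeal k P0).neg_mem hP'P
        simpa using this
      -- both P' and Q' vanish at P0: they have the common factor hForm
      set φ : MvPolynomial (Fin 4) k →ₐ[k] MvPolynomial (Fin 4) k :=
        aeval ![X 0, X 1, C (P0.2.rep 0), C (P0.2.rep 1)] with hφ
      have hφh : φ (hForm k P0.1) = hForm k P0.1 := by simp [hForm, hφ]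
      have hφl : φ (lForm k P0.2) = 0 := by
        simp [lForm, hφ]
        ring
      have hfactor : ∀ {F : MvPolynomial (Fin 4) k} {e : ℕ},
          IsWeightedHomogeneous bw F ((e, 0) : ℕ × ℕ) → F ∈ ptIdeal k P0 →
          hForm k P0.1 ∣ F := by
        intro F e hFw hFP
        rw [ptIdeal] at hFP
        obtain ⟨x, y, hxy⟩ := Ideal.mem_span_pair.mp hFP
        have := congrArg φ hxy
        rw [map_add, map_mul, map_mul, hφh, hφl, mul_zero, add_zero] at this
        rw [aeval_fix hFw _ (by simp [hφ]) (by simp [hφ])] at this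
        exact ⟨φ x, by rw [← this]; ring⟩
      have hdvdP : hForm k P0.1 ∣ P' := hfactor (e := n2'.1) (by
        have : n2' = (n2'.1, 0) := by
          rw [Prod.ext_iff]
          exact ⟨rfl, hn22⟩
        rw [← this]
        exact hP'w) hP'P'
      have hdvdQ : hForm k P0.1 ∣ Q' := hfactor (e := m1.1) (by
        have : m1 = (m1.1, 0) := by
          rw [Prod.ext_iff]
          exact ⟨rfl, hm12⟩
        rw [← this]
        exact hQ'w) hQ'P
      have hunit : IsUnit (hForm k P0.1) := hcop hdvdP hdvdQ
      have h0 : psiP P0 (hForm k P0.1) = 0 := psiP_hForm P0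
      have : IsUnit (0 : MvPolynomial (Fin 2) k) := by
        rw [← h0]
        exact hunit.map (psiP P0)
      simpa using this
    have hm22 : m2.2 = 1 := by omega
    have hhmem : h ∈ pieceI k Xpts m2.1 1 := by
      refine ⟨hmem, ?_⟩
      show h ∈ weightedHomogeneousSubmodule k bw (m2.1, 1)
      rw [mem_weightedHomogeneousSubmodule]
      have : m2 = (m2.1, 1) := by
        rw [Prod.ext_iff]
        exact ⟨rfl, hm22⟩
      rw [← this]
      exact hhw
    rw [pieceI_eq_bot hX (by omega : m2.1 < κ)] at hhmem
    exact hhne (by simpa using hhmem)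


lemma family_mem {g : MvPolynomial (Fin 4) k} (hg : g ∈ pieceI k Xpts κ 1) (α β : ℕ) :
    X 0 ^ α * X 1 ^ β * g ∈ pieceI k Xpts (α + β + κ) 1 := by
  constructor
  · exact Ideal.mul_mem_left _ _ hg.1
  · show IsWeightedHomogeneous bw _ _
    have h1 : IsWeightedHomogeneous bw (X 0 ^ α * X 1 ^ β * g)
        (((α + β, 0) : ℕ × ℕ) + ((κ, 1) : ℕ × ℕ)) :=
      (isWH_Xpow_pair α β).mul ((mem_weightedHomogeneousSubmodule _ _ _ _).mp hg.2)
    have h2 : ((α + β, 0) : ℕ × ℕ) + ((κ, 1) : ℕ × ℕ) = ((α + β + κ, 1) : ℕ × ℕ) := by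
      rw [Prod.mk_add_mk]
    rwa [h2] at h1

end AuxStmt3

open AuxStmt3

theorem stmt3 {k : Type} [Field k] [IsAlgClosed k] [CharZero k] (κ : ℕ)
    (Xpts : Finset (Pt k)) (hX : GenericPts k Xpts (2 * κ))
    (g₁ g₂ : MvPolynomial (Fin 4) k)
    (hg₁ : g₁ ∈ pieceI k Xpts κ 1) (hg₂ : g₂ ∈ pieceI k Xpts κ 1)
    (hli : LinearIndependent k ![g₁, g₂])
    (hspan : Submodule.span k {g₁, g₂} = pieceI k Xpts κ 1)
    (a : ℕ) (ha : κ ≤ a) :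
    LinearIndependent k
      (fun p : Fin (a - κ + 1) × Fin 2 =>
        X 0 ^ (a - κ - (p.1 : ℕ)) * X 1 ^ (p.1 : ℕ) * ![g₁, g₂] p.2) ∧
    Submodule.span k
      (Set.range fun p : Fin (a - κ + 1) × Fin 2 =>
        X 0 ^ (a - κ - (p.1 : ℕ)) * X 1 ^ (p.1 : ℕ) * ![g₁, g₂] p.2) =
      pieceI k Xpts a 1 ∧
    Module.finrank k ↥(pieceI k Xpts a 1) = 2 * (a - κ) + 2 := by
  classical
  set j : ℕ := a - κ with hj
  set F : Fin (j + 1) × Fin 2 → MvPolynomial (Fin 4) k :=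
    fun p => X 0 ^ (j - (p.1 : ℕ)) * X 1 ^ (p.1 : ℕ) * ![g₁, g₂] p.2 with hF
  have hFmem : ∀ p, F p ∈ pieceI k Xpts a 1 := by
    rintro ⟨i, ε⟩
    have hi : (i : ℕ) ≤ j := by omega
    have h1 : (j - (i : ℕ)) + (i : ℕ) + κ = a := by omega
    have hgε : ![g₁, g₂] ε ∈ pieceI k Xpts κ 1 := by
      fin_cases ε
      · exact hg₁
      · exact hg₂
    have := family_mem hgε (j - (i : ℕ)) (i : ℕ)
    rw [h1] at this
    exact this
  have hLI : LinearIndependent k F := by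
    rw [Fintype.linearIndependent_iff]
    intro c hc i
    set Pc : MvPolynomial (Fin 4) k :=
      ∑ i : Fin (j + 1), C (c (i, 0)) * (X 0 ^ (j - (i : ℕ)) * X 1 ^ (i : ℕ)) with hPc
    set Qc : MvPolynomial (Fin 4) k :=
      ∑ i : Fin (j + 1), C (c (i, 1)) * (X 0 ^ (j - (i : ℕ)) * X 1 ^ (i : ℕ)) with hQc
    have hsplit : Pc * g₁ + Qc * g₂ = 0 := by
      have heq : ∑ p : Fin (j + 1) × Fin 2, c p • F p = Pc * g₁ + Qc * g₂ := by
        rw [Fintype.sum_prod_type, hPc, hQc, Finset.sum_mul, Finset.sum_mul,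
          ← Finset.sum_add_distrib]
        apply Finset.sum_congr rfl
        intro i _
        rw [Fin.sum_univ_two]
        simp only [hF, Matrix.cons_val_zero, Matrix.cons_val_one, Matrix.head_cons,
          smul_eq_C_mul]
        ring
      rw [← heq, hc]
    have hterm : ∀ (b : Fin (j + 1) → k) (i : Fin (j + 1)),
        IsWeightedHomogeneous bw (C (b i) * (X 0 ^ (j - (i : ℕ)) * X 1 ^ (i : ℕ)))
          ((j, 0) : ℕ × ℕ) := by
      intro b i
      have h2 := (isWeightedHomogeneous_C bw (b i)).mul (isWH_Xpow_pair (j - (i : ℕ)) (i : ℕ))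
      have hij : (i : ℕ) < j + 1 := i.isLt
      have h3 : ((0 : ℕ × ℕ)) + ((j - (i : ℕ) + (i : ℕ), 0) : ℕ × ℕ) = ((j, 0) : ℕ × ℕ) := by
        rw [zero_add]
        congr 1
        omega
      rwa [h3] at h2
    have hPw : IsWeightedHomogeneous bw Pc ((j, 0) : ℕ × ℕ) :=
      IsWeightedHomogeneous.sum _ _ _ (fun i _ => hterm (fun i => c (i, 0)) i)
    have hQw : IsWeightedHomogeneous bw Qc ((j, 0) : ℕ × ℕ) :=
      IsWeightedHomogeneous.sum _ _ _ (fun i _ => hterm (fun i => c (i, 1)) i)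
    obtain ⟨hP0, hQ0⟩ := key_claim hX hg₁ hg₂ hli hPw hQw hsplit
    have hc1 := sum_Xpow_eq_zero (n := j) (c := fun i => c (i, 0)) hP0
    have hc2 := sum_Xpow_eq_zero (n := j) (c := fun i => c (i, 1)) hQ0
    obtain ⟨i1, ε⟩ := i
    fin_cases ε
    · exact hc1 i1
    · exact hc2 i1
  have hspanle : Submodule.span k (Set.range F) ≤ pieceI k Xpts a 1 := by
    rw [Submodule.span_le]
    rintro x ⟨p, rfl⟩
    exact hFmem p
  have hcard : Fintype.card (Fin (j + 1) × Fin 2) = 2 * j + 2 := by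
    simp
    ring
  have hfr : Module.finrank k (pieceI k Xpts a 1) = 2 * j + 2 := by
    have hgen := hX.2 a 1
    have hmin : min ((a + 1) * (1 + 1)) (2 * κ) = 2 * κ := min_eq_right (by omega)
    rw [hmin] at hgen
    have hle : Module.finrank k (pieceI k Xpts a 1) ≤ (a + 1) * 2 :=
      le_trans (Submodule.finrank_mono inf_le_right) (finrank_bideg_le a)
    have hge : 2 * j + 2 ≤ Module.finrank k (pieceI k Xpts a 1) := by
      have h1 : Module.finrank k (Submodule.span k (Set.range F)) = 2 * j + 2 := by
        rw [finrank_span_eq_card hLI, hcard]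
      calc 2 * j + 2 = Module.finrank k (Submodule.span k (Set.range F)) := h1.symm
        _ ≤ Module.finrank k (pieceI k Xpts a 1) := Submodule.finrank_mono hspanle
    omega
  refine ⟨hLI, ?_, by rw [hfr]⟩
  apply Submodule.eq_of_le_of_finrank_le hspanle
  rw [hfr, finrank_span_eq_card hLI, hcard]
end
end

section
/- Let g_1, g_2 ∈ R be bihomogeneous elements of bidegree (k,1) forming a regular sequence in R. Let Q_0, Q_1, Q_2, Q_3, P_0, P_1, P_2, P_3 ∈ k[s,t] and set f_i = Q_i g_1 + P_i g_2 for i = 0,...,3. Then a tuple (s_0, s_1, s_2, s_3) ∈ k[s,t]^4 satisfies s_0 f_0 + s_1 f_1 + s_2 f_2 + s_3 f_3 = 0 if and only if s_0 Q_0 + s_1 Q_1 + s_2 Q_2 + s_3 Q_3 = 0 and s_0 P_0 + s_1 P_1 + s_2 P_2 + s_3 P_3 = 0. In other words, the syzygies of (f_0, f_1, f_2, f_3) with entries in k[s,t] are exactly the elements of the kernel over k[s,t] of the 2 x 4 matrix QP whose rows are (Q_0, Q_1, Q_2, Q_3) and (P_0, P_1, P_2, P_3). -/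
open MvPolynomial

noncomputable section

variable (k : Type) [Field k] [IsAlgClosed k] [CharZero k]

open Pointwise

/-- The substitution `u ↦ 0, v ↦ 0` as a `k`-algebra endomorphism of `R`. -/
def phi4 : MvPolynomial (Fin 4) k →ₐ[k] MvPolynomial (Fin 4) k :=
  aeval ![X 0, X 1, 0, 0]

lemma phi4_fix {p : MvPolynomial (Fin 4) k} (hp : p ∈ Kst k) : phi4 k p = p := by
  induction hp using Algebra.adjoin_induction with
  | mem x hx =>
      rcases hx with rfl | rfl <;> simp [phi4, aeval_X]
  | algebraMap r => simp [phi4]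
  | add x y _ _ hx hy => simp [map_add, hx, hy]
  | mul x y _ _ hx hy => simp [map_mul, hx, hy]

lemma phi4_kill {κ : ℕ} {g : MvPolynomial (Fin 4) k} (hg : g ∈ bideg k κ 1) :
    phi4 k g = 0 := by
  have hg' : g.IsWeightedHomogeneous (bw) (κ, 1) := hg
  conv_lhs => rw [g.as_sum]
  rw [map_sum]
  apply Finset.sum_eq_zero
  intro d hd
  have hcoeff : coeff d g ≠ 0 := mem_support_iff.mp hd
  have hdeg := hg' hcoeff
  have hsnd : d 2 + d 3 = 1 := by
    have := congrArg Prod.snd hdeg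
    rw [Finsupp.weight_apply] at this
    rw [Finsupp.sum_fintype] at this
    · simpa [Fin.sum_univ_four, bw] using this
    · intro i; simp
  have h23 : d 2 ≠ 0 ∨ d 3 ≠ 0 := by omega
  rw [phi4, aeval_monomial]
  rcases h23 with h | h
  · have : (2 : Fin 4) ∈ d.support := Finsupp.mem_support_iff.mpr h
    rw [Finsupp.prod, Finset.prod_eq_zero this (by simp [zero_pow h]), mul_zero]
  · have : (3 : Fin 4) ∈ d.support := Finsupp.mem_support_iff.mpr h
    rw [Finsupp.prod, Finset.prod_eq_zero this (by simp [zero_pow h]), mul_zero]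

theorem stmt4 {k : Type} [Field k] [IsAlgClosed k] [CharZero k] (κ : ℕ)
    (g₁ g₂ : MvPolynomial (Fin 4) k)
    (hg₁ : g₁ ∈ bideg k κ 1) (hg₂ : g₂ ∈ bideg k κ 1)
    (hreg : RingTheory.Sequence.IsRegular (MvPolynomial (Fin 4) k) [g₁, g₂])
    (Q P : Fin 4 → MvPolynomial (Fin 4) k)
    (hQ : ∀ i, Q i ∈ Kst k) (hP : ∀ i, P i ∈ Kst k)
    (f : Fin 4 → MvPolynomial (Fin 4) k)
    (hf : ∀ i, f i = Q i * g₁ + P i * g₂) :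
    ∀ s : Fin 4 → MvPolynomial (Fin 4) k, (∀ i, s i ∈ Kst k) →
      ((∑ i, s i * f i = 0) ↔ ((∑ i, s i * Q i = 0) ∧ (∑ i, s i * P i = 0))) := by
  
  intro s hs
  have key : ∑ i, s i * f i = (∑ i, s i * Q i) * g₁ + (∑ i, s i * P i) * g₂ := by
    rw [Finset.sum_mul, Finset.sum_mul, ← Finset.sum_add_distrib]
    exact Finset.sum_congr rfl fun i _ => by rw [hf]; ring
  constructor
  · intro h0
    rw [key] at h0
    set A := ∑ i, s i * Q i with hA
    set B := ∑ i, s i * P i with hB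
    have hAK : A ∈ Kst k := Subalgebra.sum_mem _ fun i _ => mul_mem (hs i) (hQ i)
    have hBK : B ∈ Kst k := Subalgebra.sum_mem _ fun i _ => mul_mem (hs i) (hP i)
    obtain ⟨hr1, hr2⟩ :=
      (RingTheory.Sequence.isWeaklyRegular_cons_iff (MvPolynomial (Fin 4) k) g₁
        [g₂]).mp hreg.toIsWeaklyRegular
    have hr2' : IsSMulRegular (QuotSMulTop g₁ (MvPolynomial (Fin 4) k)) g₂ :=
      (RingTheory.Sequence.isWeaklyRegular_singleton_iff _ _).mp hr2
    have heq : (g₁ • ⊤ : Submodule (MvPolynomial (Fin 4) k) (MvPolynomial (Fin 4) k))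
        = Ideal.span {g₁} := by
      rw [← Submodule.ideal_span_singleton_smul, Ideal.smul_eq_mul, Ideal.mul_top]
    have hmem : B * g₂ ∈ (g₁ • ⊤ :
        Submodule (MvPolynomial (Fin 4) k) (MvPolynomial (Fin 4) k)) := by
      rw [heq, Ideal.mem_span_singleton]
      exact ⟨-A, by linear_combination h0⟩
    have hBzero : (Submodule.Quotient.mk B : QuotSMulTop g₁ (MvPolynomial (Fin 4) k)) = 0 := by
      apply hr2'
      show g₂ • _ = g₂ • (0 : QuotSMulTop g₁ (MvPolynomial (Fin 4) k))
      rw [smul_zero, ← Submodule.Quotient.mk_smul, smul_eq_mul, mul_comm]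
      exact (Submodule.Quotient.mk_eq_zero _).mpr hmem
    rw [Submodule.Quotient.mk_eq_zero, heq, Ideal.mem_span_singleton] at hBzero
    obtain ⟨c, hc⟩ := hBzero
    have hB0 : B = 0 := by
      have := phi4_fix k hBK
      rw [hc, map_mul, phi4_kill k hg₁, zero_mul] at this
      rw [hc, ← this]
    have hg₁ne : g₁ ≠ 0 := by
      rintro rfl
      have : (1 : MvPolynomial (Fin 4) k) = 0 :=
        hr1 (show (0 : MvPolynomial (Fin 4) k) • (1 : MvPolynomial (Fin 4) k) = 0 • 0 by simp)
      exact one_ne_zero this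
    have hA0 : A = 0 := by
      rw [hB0, zero_mul, add_zero] at h0
      rcases mul_eq_zero.mp h0 with h | h
      · exact h
      · exact absurd h hg₁ne
    exact ⟨hA0, hB0⟩
  · rintro ⟨h1, h2⟩
    rw [key, h1, h2, zero_mul, zero_mul, add_zero]
end
end

section
/- Let X be a generic set of r = 2k points in P^1 x P^1, let a ≥ k+1, and let U = {f_0,...,f_3} be a generic 4-dimensional subspace of (I_X)_{(a,1)}. Let S_1, S_2 ∈ k[s,t]^4 be a free basis of the syzygy module { (s_0,...,s_3) ∈ k[s,t]^4 : Σ s_i f_i = 0 } whose components are homogeneous of degree a − k. Then the 2(a+k) elements { s^α t^β S_i : α + β = a + k − 1, i = 1,2 } form a k-basis of the space of syzygies of (f_0,...,f_3) whose components are homogeneous of degree 2a − 1; in particular this space has dimension 2a + r. -/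
open MvPolynomial

noncomputable section

variable (k : Type) [Field k] [IsAlgClosed k] [CharZero k]

/-- The `k`-linear map `(s₀,s₁,s₂,s₃) ↦ Σ sᵢ fᵢ` whose kernel is `Syz(f₀,…,f₃)`. -/
def syzMap (f : Fin 4 → MvPolynomial (Fin 4) k) :
    (Fin 4 → MvPolynomial (Fin 4) k) →ₗ[k] MvPolynomial (Fin 4) k where
  toFun s := ∑ i, s i * f i
  map_add' a b := by simp [add_mul, Finset.sum_add_distrib]
  map_smul' c a := by simp [Finset.smul_sum, smul_mul_assoc]

/-- The `k`-vector space of syzygies of `(f₀,…,f₃)` all of whose components are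
bihomogeneous of bidegree `(d,0)`; for `d = 2a-1` this is the graded piece `(Z₁)_ν`,
`ν = (2a-1,0)`, of the approximation complex. -/
def syzPiece (f : Fin 4 → MvPolynomial (Fin 4) k) (d : ℕ) :
    Submodule k (Fin 4 → MvPolynomial (Fin 4) k) :=
  (Submodule.pi Set.univ fun _ : Fin 4 => bideg k d 0) ⊓ LinearMap.ker (syzMap k f)

set_option linter.unusedSectionVars false

lemma weight_bw (d : Fin 4 →₀ ℕ) : Finsupp.weight bw d = (d 0 + d 1, d 2 + d 3) := by
  simp [Finsupp.weight_apply, Finsupp.sum_fintype, Fin.sum_univ_four, bw, Prod.ext_iff,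
    Prod.smul_def]

lemma mem_bideg {p : MvPolynomial (Fin 4) k} {i j : ℕ} :
    p ∈ bideg k i j ↔ p.IsWeightedHomogeneous bw (i, j) := Iff.rfl

lemma bideg_subset_Kst {p : MvPolynomial (Fin 4) k} {d : ℕ} (hp : p ∈ bideg k d 0) :
    p ∈ Kst k := by
  have : Kst k = MvPolynomial.supported k ({0, 1} : Set (Fin 4)) := by
    rw [Kst, MvPolynomial.supported, Set.image_pair]
  rw [this, MvPolynomial.mem_supported]
  intro i hi
  rw [Finset.mem_coe, MvPolynomial.mem_vars] at hi
  obtain ⟨e, he, hie⟩ := hi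
  have hw := (mem_bideg k).1 hp (by simpa [MvPolynomial.mem_support_iff] using he)
  rw [weight_bw] at hw
  have h2 : e 2 + e 3 = 0 := congrArg Prod.snd hw
  rw [Finsupp.mem_support_iff] at hie
  fin_cases i <;> simp_all <;> omega

set_option linter.unusedSectionVars false

/-- exponent of the monomial s^α t^β -/
def E (α β : ℕ) : Fin 4 →₀ ℕ := Finsupp.single 0 α + Finsupp.single 1 β

lemma X_pow_mul_X_pow (α β : ℕ) :
    (X 0 ^ α * X 1 ^ β : MvPolynomial (Fin 4) k) = monomial (E α β) 1 := by
  rw [X_pow_eq_monomial, X_pow_eq_monomial, monomial_mul, one_mul, E]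

lemma weight_E (α β : ℕ) : Finsupp.weight bw (E α β) = ((α + β : ℕ), (0:ℕ)) := by
  rw [weight_bw, E]; simp

lemma comp_mul {p S : MvPolynomial (Fin 4) k} {e D m₀ : ℕ × ℕ}
    (hS : S.IsWeightedHomogeneous bw e) (hm : m₀ + e = D) :
    weightedHomogeneousComponent bw D (p * S) =
      weightedHomogeneousComponent bw m₀ p * S := by
  classical
  have hdecomp : p = weightedHomogeneousComponent bw m₀ p +
      (p - weightedHomogeneousComponent bw m₀ p) := by ring
  have h0 : weightedHomogeneousComponent bw D
      (weightedHomogeneousComponent bw m₀ p * S) =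
      weightedHomogeneousComponent bw m₀ p * S := by
    refine IsWeightedHomogeneous.weightedHomogeneousComponent_same ?_
    have := (weightedHomogeneousComponent_isWeightedHomogeneous (w := bw) m₀ p).mul hS
    rwa [hm] at this
  have h1 : weightedHomogeneousComponent bw D
      ((p - weightedHomogeneousComponent bw m₀ p) * S) = 0 := by
    apply weightedHomogeneousComponent_eq_zero'
    intro d hd
    have hd' := MvPolynomial.support_mul _ _ hd
    rw [Finset.mem_add] at hd'
    obtain ⟨d₁, hd₁, d₂, hd₂, rfl⟩ := hd'
    rw [MvPolynomial.mem_support_iff] at hd₁ hd₂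
    have hw2 : Finsupp.weight bw d₂ = e := hS hd₂
    have hw1 : Finsupp.weight bw d₁ ≠ m₀ := by
      intro h
      apply hd₁
      rw [MvPolynomial.coeff_sub, coeff_weightedHomogeneousComponent, if_pos h, sub_self]
    rw [map_add, hw2]
    intro h
    exact hw1 (by rw [← hm] at h; exact add_right_cancel h)
  conv_lhs => rw [hdecomp]
  rw [add_mul, map_add, h0, h1, add_zero]

lemma E_apply_one (α β : ℕ) : E α β 1 = β := by simp [E]

lemma E_inj {α β α' β' : ℕ} (h : E α β = E α' β') : β = β' := by
  have := congrArg (fun f => f 1) h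
  simpa [E_apply_one] using this

lemma li_mon (D n : ℕ) :
    LinearIndependent k (fun β : Fin n => (monomial (E (D - β) β) 1 : MvPolynomial (Fin 4) k)) := by
  have hinj : Function.Injective (fun β : Fin n => E (D - β) β) := by
    intro β β' h
    exact Fin.ext (E_inj h)
  have := (MvPolynomial.basisMonomials (Fin 4) k).linearIndependent.comp _ hinj
  simpa [MvPolynomial.coe_basisMonomials, Function.comp_def] using this

lemma homog_rep {p : MvPolynomial (Fin 4) k} {D n : ℕ} (hp : p.IsWeightedHomogeneous bw (D, 0))
    (hn : n = D + 1) :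
    p = ∑ β : Fin n, coeff (E (D - (β:ℕ)) (β:ℕ)) p • (monomial (E (D - (β:ℕ)) (β:ℕ)) 1 : MvPolynomial (Fin 4) k) := by
  classical
  ext e
  rw [MvPolynomial.coeff_sum]
  by_cases he : coeff e p = 0
  · rw [he]
    symm
    apply Finset.sum_eq_zero
    intro β _
    rw [MvPolynomial.coeff_smul, MvPolynomial.coeff_monomial]
    by_cases h : E (D - (β:ℕ)) (β:ℕ) = e
    · rw [if_pos h, smul_eq_mul, mul_one, h, he]
    · rw [if_neg h, smul_eq_mul, mul_zero]
  · have hw := hp he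
    rw [weight_bw] at hw
    have h1 : e 0 + e 1 = D := congrArg Prod.fst hw
    have h2 : e 2 + e 3 = 0 := congrArg Prod.snd hw
    have heE : e = E (e 0) (e 1) := by
      ext i
      fin_cases i <;> simp [E, Finsupp.single_apply] <;> omega
    have hβ : e 1 < n := by omega
    have he0 : e 0 = D - e 1 := by omega
    rw [Finset.sum_eq_single (⟨e 1, hβ⟩ : Fin n)]
    · rw [MvPolynomial.coeff_smul, MvPolynomial.coeff_monomial, if_pos, smul_eq_mul, mul_one]
      · conv_lhs => rw [heE, he0]
      · conv_rhs => rw [heE, he0]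
    · intro β _ hβne
      rw [MvPolynomial.coeff_smul, MvPolynomial.coeff_monomial, if_neg, smul_eq_mul, mul_zero]
      intro h
      apply hβne
      have := E_inj (h.trans heE)
      exact Fin.ext (by simp [this])
    · intro h
      exact absurd (Finset.mem_univ _) h

theorem stmt11' {k : Type} [Field k] [IsAlgClosed k] [CharZero k] (κ a : ℕ)
    (ha : κ + 1 ≤ a)
    (f : Fin 4 → MvPolynomial (Fin 4) k)
    (S₁ S₂ : Fin 4 → MvPolynomial (Fin 4) k)
    (hS₁ : ∀ i, S₁ i ∈ bideg k (a - κ) 0) (hS₂ : ∀ i, S₂ i ∈ bideg k (a - κ) 0)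
    (hS₁syz : ∑ i, S₁ i * f i = 0) (hS₂syz : ∑ i, S₂ i * f i = 0)
    (hgen : ∀ s : Fin 4 → MvPolynomial (Fin 4) k, (∀ i, s i ∈ Kst k) →
      (∑ i, s i * f i = 0) →
      ∃ p q : MvPolynomial (Fin 4) k, p ∈ Kst k ∧ q ∈ Kst k ∧
        ∀ i, s i = p * S₁ i + q * S₂ i)
    (hfree : ∀ p q : MvPolynomial (Fin 4) k, p ∈ Kst k → q ∈ Kst k →
      (∀ i, p * S₁ i + q * S₂ i = 0) → p = 0 ∧ q = 0) :
    LinearIndependent k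
      (fun p : Fin (a + κ) × Fin 2 => fun i =>
        X 0 ^ (a + κ - 1 - (p.1 : ℕ)) * X 1 ^ (p.1 : ℕ) * ![S₁, S₂] p.2 i) ∧
    Submodule.span k
      (Set.range fun p : Fin (a + κ) × Fin 2 => fun i =>
        X 0 ^ (a + κ - 1 - (p.1 : ℕ)) * X 1 ^ (p.1 : ℕ) * ![S₁, S₂] p.2 i) =
      syzPiece k f (2 * a - 1) ∧
    Module.finrank k ↥(syzPiece k f (2 * a - 1)) = 2 * a + 2 * κ := by
  classical
  set D := a + κ - 1 with hD
  set v : Fin (a + κ) × Fin 2 → (Fin 4 → MvPolynomial (Fin 4) k) :=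
    fun p => fun i => X 0 ^ (a + κ - 1 - (p.1 : ℕ)) * X 1 ^ (p.1 : ℕ) * ![S₁, S₂] p.2 i
    with hvdef
  have hv : ∀ (pr : Fin (a + κ) × Fin 2) (i : Fin 4),
      v pr i = monomial (E (D - (pr.1 : ℕ)) (pr.1 : ℕ)) 1 * ![S₁, S₂] pr.2 i := by
    intro pr i
    rw [hvdef, ← X_pow_mul_X_pow]
  have hmonKst : ∀ β : Fin (a + κ),
      (monomial (E (D - (β : ℕ)) (β : ℕ)) 1 : MvPolynomial (Fin 4) k) ∈ Kst k := by
    intro β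
    rw [← X_pow_mul_X_pow]
    exact mul_mem (pow_mem (Algebra.subset_adjoin (by simp)) _)
      (pow_mem (Algebra.subset_adjoin (by simp)) _)
  have hmonhom : ∀ β : Fin (a + κ),
      (monomial (E (D - (β : ℕ)) (β : ℕ)) 1 : MvPolynomial (Fin 4) k).IsWeightedHomogeneous
        bw (D, 0) := by
    intro β
    apply isWeightedHomogeneous_monomial
    rw [weight_E]
    have : D - (β : ℕ) + (β : ℕ) = D := by
      have := β.isLt; omega
    rw [this]
  -- linear independence
  have hLI : LinearIndependent k v := by
    rw [Fintype.linearIndependent_iff]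
    intro g hg
    set pP := ∑ β : Fin (a + κ),
      g (β, 0) • (monomial (E (D - (β : ℕ)) (β : ℕ)) 1 : MvPolynomial (Fin 4) k) with hpP
    set qP := ∑ β : Fin (a + κ),
      g (β, 1) • (monomial (E (D - (β : ℕ)) (β : ℕ)) 1 : MvPolynomial (Fin 4) k) with hqP
    have hzero : ∀ i, pP * S₁ i + qP * S₂ i = 0 := by
      intro i
      have hgi := congrFun hg i
      simp only [Finset.sum_apply, Pi.zero_apply] at hgi
      rw [hpP, hqP, Finset.sum_mul, Finset.sum_mul, ← Finset.sum_add_distrib, ← hgi,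
        Fintype.sum_prod_type]
      refine Finset.sum_congr rfl fun β _ => ?_
      rw [Fin.sum_univ_two]
      simp only [Pi.smul_apply, hv, smul_mul_assoc, Matrix.cons_val_zero, Matrix.cons_val_one,
        Matrix.head_cons]
    obtain ⟨hp0, hq0⟩ := hfree pP qP
      (sum_mem fun β _ => Subalgebra.smul_mem _ (hmonKst β) _)
      (sum_mem fun β _ => Subalgebra.smul_mem _ (hmonKst β) _) hzero
    have hli := Fintype.linearIndependent_iff.1 (li_mon k D (a + κ))
    have h0 := hli (fun β => g (β, 0)) (hpP.symm.trans hp0)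
    have h1 := hli (fun β => g (β, 1)) (hqP.symm.trans hq0)
    rintro ⟨β, j⟩
    fin_cases j
    · exact h0 β
    · exact h1 β
  -- span
  have hspan : Submodule.span k (Set.range v) = syzPiece k f (2 * a - 1) := by
    apply le_antisymm
    · rw [Submodule.span_le]
      rintro _ ⟨⟨β, j⟩, rfl⟩
      rw [SetLike.mem_coe, syzPiece, Submodule.mem_inf]
      constructor
      · rw [Submodule.mem_pi]
        intro i _
        rw [hv]
        show ((monomial (E (D - (β:ℕ)) (β:ℕ)) 1 : MvPolynomial (Fin 4) k) *
          ![S₁, S₂] j i).IsWeightedHomogeneous bw ((2*a-1 : ℕ), (0:ℕ))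
        have hprod : ((D : ℕ), (0:ℕ)) + ((a - κ : ℕ), (0:ℕ)) = ((2*a-1 : ℕ), (0:ℕ)) := by
          rw [Prod.mk_add_mk, Prod.mk.injEq]
          constructor <;> omega
        have hSj : (![S₁, S₂] j i).IsWeightedHomogeneous bw ((a - κ : ℕ), (0:ℕ)) := by
          fin_cases j
          · exact hS₁ i
          · exact hS₂ i
        have := (hmonhom β).mul hSj
        rwa [hprod] at this
      · rw [LinearMap.mem_ker]
        show ∑ i, v (β, j) i * f i = 0
        have : ∀ i, v (β, j) i * f i =
            (monomial (E (D - (β:ℕ)) (β:ℕ)) 1 : MvPolynomial (Fin 4) k) *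
              (![S₁, S₂] j i * f i) := by
          intro i; rw [hv, mul_assoc]
        rw [Finset.sum_congr rfl fun i _ => this i, ← Finset.mul_sum]
        have : ∑ i, ![S₁, S₂] j i * f i = 0 := by
          fin_cases j
          · exact hS₁syz
          · exact hS₂syz
        rw [this, mul_zero]
    · intro s hs
      rw [syzPiece, Submodule.mem_inf] at hs
      obtain ⟨hsdeg, hsker⟩ := hs
      rw [Submodule.mem_pi] at hsdeg
      have hsdeg' : ∀ i, (s i).IsWeightedHomogeneous bw ((2*a-1 : ℕ), (0:ℕ)) :=
        fun i => hsdeg i (Set.mem_univ i)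
      have hsker' : ∑ i, s i * f i = 0 := hsker
      obtain ⟨p, q, hpK, hqK, hpq⟩ := hgen s
        (fun i => bideg_subset_Kst k (hsdeg i (Set.mem_univ i))) hsker'
      set p' := weightedHomogeneousComponent bw ((D : ℕ), (0:ℕ)) p with hp'
      set q' := weightedHomogeneousComponent bw ((D : ℕ), (0:ℕ)) q with hq'
      have hadd : ((D : ℕ), (0:ℕ)) + ((a - κ : ℕ), (0:ℕ)) = ((2*a-1 : ℕ), (0:ℕ)) := by
        rw [Prod.mk_add_mk, Prod.mk.injEq]
        constructor <;> omega
      have key : ∀ i, s i = p' * S₁ i + q' * S₂ i := by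
        intro i
        have := congrArg (weightedHomogeneousComponent bw ((2*a-1 : ℕ), (0:ℕ))) (hpq i)
        rw [(hsdeg' i).weightedHomogeneousComponent_same, map_add,
          comp_mul k (hS₁ i) hadd, comp_mul k (hS₂ i) hadd] at this
        exact this
      have hn1 : a + κ = D + 1 := by omega
      have hp'hom : p'.IsWeightedHomogeneous bw ((D : ℕ), (0:ℕ)) :=
        weightedHomogeneousComponent_isWeightedHomogeneous _ _
      have hq'hom : q'.IsWeightedHomogeneous bw ((D : ℕ), (0:ℕ)) :=
        weightedHomogeneousComponent_isWeightedHomogeneous _ _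
      have hp'rep := homog_rep k hp'hom hn1
      have hq'rep := homog_rep k hq'hom hn1
      set c : Fin (a + κ) × Fin 2 → k := fun pr =>
        coeff (E (D - (pr.1 : ℕ)) (pr.1 : ℕ)) (![p', q'] pr.2) with hc
      have hsum : s = ∑ pr : Fin (a + κ) × Fin 2, c pr • v pr := by
        funext i
        rw [Finset.sum_apply]
        have : ∀ pr : Fin (a + κ) × Fin 2, (c pr • v pr) i =
            c pr • (monomial (E (D - (pr.1:ℕ)) (pr.1:ℕ)) 1 : MvPolynomial (Fin 4) k) *
              ![S₁, S₂] pr.2 i := by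
          intro pr
          rw [Pi.smul_apply, hv, smul_mul_assoc]
        rw [Finset.sum_congr rfl fun pr _ => this pr, Fintype.sum_prod_type]
        have hinner : ∀ β : Fin (a + κ), ∑ j : Fin 2,
            c (β, j) • (monomial (E (D - (β:ℕ)) (β:ℕ)) 1 : MvPolynomial (Fin 4) k) *
              ![S₁, S₂] j i =
            (c (β, 0) • (monomial (E (D - (β:ℕ)) (β:ℕ)) 1 : MvPolynomial (Fin 4) k)) * S₁ i +
            (c (β, 1) • (monomial (E (D - (β:ℕ)) (β:ℕ)) 1 : MvPolynomial (Fin 4) k)) * S₂ i := by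
          intro β
          rw [Fin.sum_univ_two]
          norm_num
        rw [Finset.sum_congr rfl fun β _ => hinner β, Finset.sum_add_distrib,
          ← Finset.sum_mul, ← Finset.sum_mul]
        have e1 : ∑ β : Fin (a + κ),
            c (β, 0) • (monomial (E (D - (β:ℕ)) (β:ℕ)) 1 : MvPolynomial (Fin 4) k) = p' := by
          conv_rhs => rw [hp'rep]
          refine Finset.sum_congr rfl fun β _ => ?_
          simp [hc]
        have e2 : ∑ β : Fin (a + κ),
            c (β, 1) • (monomial (E (D - (β:ℕ)) (β:ℕ)) 1 : MvPolynomial (Fin 4) k) = q' := by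
          conv_rhs => rw [hq'rep]
          refine Finset.sum_congr rfl fun β _ => ?_
          simp [hc]
        rw [e1, e2, key i]
      rw [hsum]
      exact Submodule.sum_mem _ fun pr _ =>
        Submodule.smul_mem _ _ (Submodule.subset_span (Set.mem_range_self pr))
  refine ⟨hLI, hspan, ?_⟩
  rw [← hspan, finrank_span_eq_card hLI]
  simp only [Fintype.card_prod, Fintype.card_fin]
  omega


theorem stmt11 {k : Type} [Field k] [IsAlgClosed k] [CharZero k] (κ a n : ℕ)
    (ha : κ + 1 ≤ a)
    (Xpts : Finset (Pt k)) (hX : GenericPts k Xpts (2 * κ))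
    (b : Fin n → MvPolynomial (Fin 4) k)
    (hbli : LinearIndependent k b)
    (hbspan : Submodule.span k (Set.range b) = pieceI k Xpts a 1)
    (C : Matrix (Fin 4) (Fin n) k)
    (hminors : ∀ cols : Fin 4 → Fin n, Function.Injective cols →
      (C.submatrix id cols).det ≠ 0)
    (f : Fin 4 → MvPolynomial (Fin 4) k)
    (hf : ∀ i, f i = ∑ m, C i m • b m)
    (S₁ S₂ : Fin 4 → MvPolynomial (Fin 4) k)
    (hS₁ : ∀ i, S₁ i ∈ bideg k (a - κ) 0) (hS₂ : ∀ i, S₂ i ∈ bideg k (a - κ) 0)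
    (hS₁syz : ∑ i, S₁ i * f i = 0) (hS₂syz : ∑ i, S₂ i * f i = 0)
    (hgen : ∀ s : Fin 4 → MvPolynomial (Fin 4) k, (∀ i, s i ∈ Kst k) →
      (∑ i, s i * f i = 0) →
      ∃ p q : MvPolynomial (Fin 4) k, p ∈ Kst k ∧ q ∈ Kst k ∧
        ∀ i, s i = p * S₁ i + q * S₂ i)
    (hfree : ∀ p q : MvPolynomial (Fin 4) k, p ∈ Kst k → q ∈ Kst k →
      (∀ i, p * S₁ i + q * S₂ i = 0) → p = 0 ∧ q = 0) :
    LinearIndependent k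
      (fun p : Fin (a + κ) × Fin 2 => fun i =>
        X 0 ^ (a + κ - 1 - (p.1 : ℕ)) * X 1 ^ (p.1 : ℕ) * ![S₁, S₂] p.2 i) ∧
    Submodule.span k
      (Set.range fun p : Fin (a + κ) × Fin 2 => fun i =>
        X 0 ^ (a + κ - 1 - (p.1 : ℕ)) * X 1 ^ (p.1 : ℕ) * ![S₁, S₂] p.2 i) =
      syzPiece k f (2 * a - 1) ∧
    Module.finrank k ↥(syzPiece k f (2 * a - 1)) = 2 * a + 2 * κ := by
  exact stmt11' κ a ha f S₁ S₂ hS₁ hS₂ hS₁syz hS₂syz hgen hfree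
end
end
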